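/- arXiv:1410.7693 — 5 statements merged into one kernel-verified Lean document; each statement's English description precedes it below -/
import Mathlib

section
/- If n is an integer, a segment in Z^3 connects centers of adjacent unit cubes, and for a pair of dominoes d0, d1 and direction u we define the effect τ^u(d0,d1) = (1/4)·det(v(d1), v(d0), u) when d1 meets the open u-shade of d0 and 0 otherwise, then for any two dominoes d0, d1 and any u in {±e1, ±e2, ±e3}, τ^u(d0,d1) = τ^{-u}(d1,d0). -/
open scoped BigOperators
noncomputable section

/-- Points of `ℝ³`. -/
abbrev R3 := Fin 3 → ℝ

/-- Euclidean inner product on `ℝ³`. -/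
def dot (x y : R3) : ℝ := ∑ i, x i * y i

/-- Determinant of the 3×3 matrix with rows `a`, `b`, `c`. -/
def det3 (a b c : R3) : ℝ := Matrix.det (Matrix.of ![a, b, c])

/-- The canonical basis vectors of `ℝ³`. -/
def stdR (i : Fin 3) : R3 := fun j => if j = i then 1 else 0

/-- `Φ`, the set of signed canonical basis vectors. -/
def PhiR : Set R3 := {u | ∃ i : Fin 3, u = stdR i ∨ u = -stdR i}

/-- A positively oriented basis with vectors in `Φ`. -/
def IsLatticeBasis (b1 b2 b3 : R3) : Prop :=
  b1 ∈ PhiR ∧ b2 ∈ PhiR ∧ b3 ∈ PhiR ∧ det3 b1 b2 b3 = 1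

/-- The basic (closed unit) cube with least corner `q ∈ ℤ³`. -/
def cubeSet (q : Fin 3 → ℤ) : Set R3 := {x | ∀ i, (q i : ℝ) ≤ x i ∧ x i ≤ q i + 1}

/-- The center of the basic cube with corner `q`. -/
def cubeCenter (q : Fin 3 → ℤ) : R3 := fun i => (q i : ℝ) + 1/2

/-- A basic cube is black when the coordinate sum of its corner is odd. -/
def cubeBlack (q : Fin 3 → ℤ) : Prop := Odd (q 0 + q 1 + q 2)

instance : DecidablePred cubeBlack := fun q => by unfold cubeBlack; infer_instance

/-- Color of a basic cube: `1` for black, `-1` for white. -/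
def col (q : Fin 3 → ℤ) : ℤ := if cubeBlack q then 1 else -1

/-- A region, given as a finite set of basic cubes (identified by corners),
realized as a subset of `ℝ³`. -/
def regionSet (R : Finset (Fin 3 → ℤ)) : Set R3 := ⋃ q ∈ R, cubeSet q

/-- A domino brick: two basic cubes sharing a face. -/
structure Domino where
  c1 : Fin 3 → ℤ
  c2 : Fin 3 → ℤ
  adj : (∑ i, |c1 i - c2 i|) = 1

instance : DecidableEq Domino := fun d e =>
  decidable_of_iff (d.c1 = e.c1 ∧ d.c2 = e.c2) (by cases d; cases e; simp)

/-- The two cubes of a domino. -/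
def Domino.cubes (d : Domino) : Finset (Fin 3 → ℤ) := {d.c1, d.c2}

/-- The domino as a subset of `ℝ³`. -/
def Domino.toSet (d : Domino) : Set R3 := cubeSet d.c1 ∪ cubeSet d.c2

/-- `v(d)`: the center of the black cube minus the center of the white cube. -/
def Domino.v (d : Domino) : R3 :=
  if cubeBlack d.c1 then (fun i => (d.c1 i : ℝ) - d.c2 i) else (fun i => (d.c2 i : ℝ) - d.c1 i)

/-- Two dominoes are the same up to the (irrelevant) ordering of their cubes. -/
def Domino.same (d e : Domino) : Prop :=
  (d.c1 = e.c1 ∧ d.c2 = e.c2) ∨ (d.c1 = e.c2 ∧ d.c2 = e.c1)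

/-- The open `u`-shade of a set `X ⊆ ℝ³`. -/
def shade (u : R3) (X : Set R3) : Set R3 :=
  interior ({y | ∃ x ∈ X, ∃ s : ℝ, 0 ≤ s ∧ y = x + s • u} \ X)

/-- The effect of the domino `d0` on the domino `d1` along `u`. -/
def tau (u : R3) (d0 d1 : Domino) : ℝ :=
  open scoped Classical in
  if (d1.toSet ∩ shade u d0.toSet).Nonempty then (1/4) * det3 d1.v d0.v u else 0

/-- The `u`-pretwist of a (finite set of) dominoes. -/
def T (u : R3) (t : Finset Domino) : ℝ := ∑ d0 ∈ t, ∑ d1 ∈ t, tau u d0 d1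

/-- `t` is a tiling of the region `R`: every domino lies in `R` and every cube
of `R` is covered by exactly one domino of `t`. -/
def IsTiling (R : Finset (Fin 3 → ℤ)) (t : Finset Domino) : Prop :=
  (∀ d ∈ t, d.c1 ∈ R ∧ d.c2 ∈ R) ∧
  ∀ q ∈ R, ∃! d, d ∈ t ∧ (q = d.c1 ∨ q = d.c2)

/-- Translation of a domino by an integer vector. -/
def Domino.translate (d : Domino) (b : Fin 3 → ℤ) : Domino :=
  ⟨fun i => d.c1 i + b i, fun i => d.c2 i + b i, by
    have h : ∀ i : Fin 3, |d.c1 i + b i - (d.c2 i + b i)| = |d.c1 i - d.c2 i| := by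
      intro i; ring_nf
    rw [Finset.sum_congr rfl fun i _ => h i]; exact d.adj⟩

/-- Reflection of a cube in the hyperplane `x_k = 0`. -/
def reflCube (k : Fin 3) (q : Fin 3 → ℤ) : Fin 3 → ℤ :=
  fun i => if i = k then -q i - 1 else q i

/-- Reflection of a domino in the hyperplane `x_k = 0`. -/
def Domino.reflect (d : Domino) (k : Fin 3) : Domino :=
  ⟨reflCube k d.c1, reflCube k d.c2, by
    have h : ∀ i : Fin 3, |reflCube k d.c1 i - reflCube k d.c2 i| = |d.c1 i - d.c2 i| := by
      intro i
      by_cases hik : i = k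
      · simp only [reflCube, if_pos hik]
        have h2 : -d.c1 i - 1 - (-d.c2 i - 1) = -(d.c1 i - d.c2 i) := by ring
        rw [h2, abs_neg]
      · simp [reflCube, hik]
    rw [Finset.sum_congr rfl fun i _ => h i]; exact d.adj⟩

/-- A signed-permutation rotation applied to a basic cube (acting on centers by
`y i = ε i * x (σ i)` and recording the new least corner). -/
def rotCube (σ : Equiv.Perm (Fin 3)) (ε : Fin 3 → ℤ) (q : Fin 3 → ℤ) : Fin 3 → ℤ :=
  fun i => if ε i = 1 then q (σ i) else -q (σ i) - 1

/-- A signed-permutation rotation applied to a domino. -/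
def Domino.rot (d : Domino) (σ : Equiv.Perm (Fin 3)) (ε : Fin 3 → ℤ) : Domino :=
  ⟨rotCube σ ε d.c1, rotCube σ ε d.c2, by
    have h : ∀ i : Fin 3, |rotCube σ ε d.c1 i - rotCube σ ε d.c2 i|
        = |d.c1 (σ i) - d.c2 (σ i)| := by
      intro i
      by_cases hi : ε i = 1
      · simp [rotCube, hi]
      · simp only [rotCube, if_neg hi]
        have h2 : -d.c1 (σ i) - 1 - (-d.c2 (σ i) - 1) = -(d.c1 (σ i) - d.c2 (σ i)) := by ring
        rw [h2, abs_neg]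
    rw [Finset.sum_congr rfl fun i _ => h i]
    rw [Equiv.sum_comp σ (fun j => |d.c1 j - d.c2 j|)]
    exact d.adj⟩

/-- Auxiliary constructor for dominoes. -/
def mkDom (p q : Fin 3 → ℤ) (h : (∑ i, |p i - q i|) = 1) : Domino := ⟨p, q, h⟩

/-- The three dominoes removed by the canonical positive trit. -/
def tritPre : Fin 3 → Domino
  | 0 => mkDom ![0,0,0] ![0,0,1] (by decide)
  | 1 => mkDom ![0,1,1] ![1,1,1] (by decide)
  | 2 => mkDom ![1,0,0] ![1,1,0] (by decide)

/-- The three dominoes placed back by the canonical positive trit. -/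
def tritPost : Fin 3 → Domino
  | 0 => mkDom ![0,0,0] ![1,0,0] (by decide)
  | 1 => mkDom ![0,0,1] ![0,1,1] (by decide)
  | 2 => mkDom ![1,1,0] ![1,1,1] (by decide)

/-- `t1` is obtained from `t0` by a flip: two dominoes of `t0` occupying a
`2×2×1` slab are replaced by the two other dominoes filling the same slab. -/
def IsFlip (t0 t1 : Finset Domino) : Prop :=
  ∃ d0 d0' d1 d1' : Domino, d0 ∈ t0 ∧ d0' ∈ t0 ∧ d0 ≠ d0' ∧
    d1 ∈ t1 ∧ d1' ∈ t1 ∧ d1 ≠ d1' ∧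
    t0 \ {d0, d0'} = t1 \ {d1, d1'} ∧
    ({d0, d0'} : Finset Domino) ≠ {d1, d1'} ∧
    d0.cubes ∪ d0'.cubes = d1.cubes ∪ d1'.cubes

/-- `t1` is obtained from `t0` by a positive trit: up to an orientation preserving
lattice isometry, three dominoes of `t0` in the canonical pre-trit position are
replaced by the three dominoes in the canonical post-trit position. -/
def IsPositiveTrit (t0 t1 : Finset Domino) : Prop :=
  ∃ (σ : Equiv.Perm (Fin 3)) (ε : Fin 3 → ℤ) (b : Fin 3 → ℤ),
    (∀ i, ε i = 1 ∨ ε i = -1) ∧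
    ((∏ i, ε i) : ℤ) * (Equiv.Perm.sign σ : ℤ) = 1 ∧
    ∃ a : Fin 3 → Domino, ∃ a' : Fin 3 → Domino,
      (∀ j, a j ∈ t0) ∧ (∀ j, a' j ∈ t1) ∧
      (∀ j, (a j).same (((tritPre j).rot σ ε).translate b)) ∧
      (∀ j, (a' j).same (((tritPost j).rot σ ε).translate b)) ∧
      t0 \ {a 0, a 1, a 2} = t1 \ {a' 0, a' 1, a' 2}

/-- A cube `q` lies in the closed shade, in the direction `±e_k` (sign `sgn`),
of the 2×2 square with normal `e_k` and corner `p` (at height `p k`). -/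
def inShade (k : Fin 3) (sgn : Bool) (p q : Fin 3 → ℤ) : Prop :=
  (∀ j, j ≠ k → q j = p j ∨ q j = p j + 1) ∧ (if sgn then p k ≤ q k else q k < p k)

instance (k : Fin 3) (sgn : Bool) (p q : Fin 3 → ℤ) : Decidable (inShade k sgn p q) := by
  unfold inShade; infer_instance

/-- The 2×2 square with normal `e_k`, corner `p`, at height `p k`
is contained in the region `R`. -/
def squareInRegion (R : Finset (Fin 3 → ℤ)) (k : Fin 3) (p : Fin 3 → ℤ) : Prop :=
  ∀ q : Fin 3 → ℤ, (∀ j, j ≠ k → q j = p j ∨ q j = p j + 1) → q k = p k →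
    q ∈ R ∨ Function.update q k (p k - 1) ∈ R

/-- `R` is fully balanced with respect to the directions `±e_k`. -/
def FullyBalancedWrt (R : Finset (Fin 3 → ℤ)) (k : Fin 3) : Prop :=
  ∀ p : Fin 3 → ℤ, squareInRegion R k p →
    (∑ q ∈ R, if inShade k true p q then col q else 0) = 0 ∧
    (∑ q ∈ R, if inShade k false p q then col q else 0) = 0

/-- `R` is a pseudocylinder with axis `e_k` and depth `n`: a planar region with
connected interior, thickened `n` layers in the direction `e_k`. -/
def IsPseudocylinder (R : Finset (Fin 3 → ℤ)) (k : Fin 3) (n : ℕ) : Prop :=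
  0 < n ∧
  (∀ q ∈ R, 0 ≤ q k ∧ q k < n) ∧
  (∀ q ∈ R, ∀ m : ℤ, 0 ≤ m → m < n → Function.update q k m ∈ R) ∧
  R.Nonempty ∧
  IsConnected (interior (regionSet (R.filter (fun q => q k = 0))))

/-- A cylinder: a pseudocylinder whose base is simply connected. -/
def IsCylinder (R : Finset (Fin 3 → ℤ)) (k : Fin 3) (n : ℕ) : Prop :=
  IsPseudocylinder R k n ∧
  SimplyConnectedSpace (interior (regionSet (R.filter (fun q => q k = 0))))

/-- A (lattice) segment: the unit straight path between the centers of two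
face-adjacent basic cubes, from the center of the cube `a` to that of `b`. -/
structure Seg where
  a : Fin 3 → ℤ
  b : Fin 3 → ℤ
  adj : (∑ i, |a i - b i|) = 1

/-- The point of a segment at parameter `x ∈ [0,1]`. -/
def Seg.pt (s : Seg) (x : ℝ) : R3 := fun i => (cubeCenter s.a i) + x * ((s.b i : ℝ) - s.a i)

/-- The direction `v(ℓ) = ℓ(1) - ℓ(0)` of a segment. -/
def Seg.vec (s : Seg) : R3 := fun i => (s.b i : ℝ) - s.a i

/-- A segment lies in a region if both its cubes do. -/
def Seg.inRegion (s : Seg) (R : Finset (Fin 3 → ℤ)) : Prop := s.a ∈ R ∧ s.b ∈ R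

/-- A straight segment in `ℝ³`, with base point `p` and direction `v`. -/
structure RSeg where
  p : R3
  v : R3

/-- The point of an `RSeg` at parameter `x ∈ [0,1]`. -/
def RSeg.pt (l : RSeg) (x : ℝ) : R3 := fun i => l.p i + x * l.v i

/-- Orientation reversal of an `RSeg`. -/
def RSeg.reverse (l : RSeg) : RSeg := ⟨fun i => l.p i + l.v i, fun i => -l.v i⟩

/-- Translation of an `RSeg`. -/
def RSeg.translate (l : RSeg) (u : R3) : RSeg := ⟨fun i => l.p i + u i, l.v⟩

/-- The `RSeg` underlying a lattice segment. -/
def Seg.toR (s : Seg) : RSeg := ⟨cubeCenter s.a, s.vec⟩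

/-- The dimer of a domino: the segment from the white center to the black center. -/
def Domino.dimer (d : Domino) : RSeg :=
  if cubeBlack d.c1 then ⟨cubeCenter d.c2, d.v⟩ else ⟨cubeCenter d.c1, d.v⟩

/-- The orthogonal projection onto the plane `u^⊥`. -/
def projO (u : R3) (x : R3) : R3 := fun i => x i - (dot x u) * u i

/-- The (slanted) projection onto `b3^⊥` with kernel spanned by `b3 + a·b1 + b·b2`. -/
def projSl (b1 b2 b3 : R3) (a b : ℝ) (x : R3) : R3 :=
  fun i => x i - (dot x b3) * (b3 i + a * b1 i + b * b2 i)

/-- The effect of segment `l0` on segment `l1` along `u` (orthogonal version). -/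
def tauR (u : R3) (l0 l1 : RSeg) : ℝ :=
  open scoped Classical in
  if ((∃ x0 ∈ Set.Icc (0:ℝ) 1, ∃ x1 ∈ Set.Icc (0:ℝ) 1,
        projO u (l0.pt x0) = projO u (l1.pt x1)) ∧ dot (l0.pt 0) u < dot (l1.pt 0) u)
  then (1/4) * det3 l1.v l0.v u else 0

/-- The slanted effect `τ^β_{a,b}(l0,l1)`. -/
def tauSl (b1 b2 b3 : R3) (a b : ℝ) (l0 l1 : RSeg) : ℝ :=
  open scoped Classical in
  if ((∃ x0 ∈ Set.Icc (0:ℝ) 1, ∃ x1 ∈ Set.Icc (0:ℝ) 1,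
        projSl b1 b2 b3 a b (l0.pt x0) = projSl b1 b2 b3 a b (l1.pt x1))
      ∧ dot (l0.pt 0) b3 < dot (l1.pt 0) b3)
  then det3 l1.v l0.v b3 else 0

/-- `T^u(A,B)` summed over two finite families of segments. -/
def Tfam {n m : ℕ} (u : R3) (A : Fin n → RSeg) (B : Fin m → RSeg) : ℝ :=
  ∑ k, ∑ l, tauR u (A k) (B l)

/-- The combinatorial linking number (along `u`) of two disjoint closed curves:
half the symmetrized sum of effects. -/
def LinkAlong {n m : ℕ} (u : R3) (A : Fin n → RSeg) (B : Fin m → RSeg) : ℝ :=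
  (Tfam u A B + Tfam u B A) / 2

/-- The `u`-pretwist of a tiling, computed via dimers. -/
def Tdim (u : R3) (t : Finset Domino) : ℝ := ∑ d0 ∈ t, ∑ d1 ∈ t, tauR u d0.dimer d1.dimer

/-- A closed curve given by a cyclic list of segments. -/
def IsClosedCurve {n : ℕ} (γ : Fin n → RSeg) : Prop :=
  2 ≤ n ∧ ∀ k : Fin n,
    (γ k).pt 1 = (γ ⟨(k.val + 1) % n, Nat.mod_lt _ k.pos⟩).pt 0

/-- A closed curve is simple when its vertices are pairwise distinct. -/
def IsSimpleCurve {n : ℕ} (γ : Fin n → RSeg) : Prop :=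
  Function.Injective (fun k : Fin n => (γ k).pt 0)

/-- The (cyclically) next segment of a curve. -/
def nextSeg {n : ℕ} (hn : 0 < n) (γ : Fin n → RSeg) (k : Fin n) : RSeg :=
  γ ⟨(k.val + 1) % n, Nat.mod_lt _ hn⟩

/-- Adjacency of basic cubes. -/
def cubeAdj (p q : Fin 3 → ℤ) : Prop := (∑ i, |p i - q i|) = 1

/-- The associated graph of a region: vertices are cubes, edges join
face-adjacent cubes. -/
def cubeGraph (R : Finset (Fin 3 → ℤ)) : SimpleGraph {q // q ∈ R} where
  Adj p q := cubeAdj p.val q.val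
  symm := by
    constructor
    intro p q h
    unfold cubeAdj at h ⊢
    rw [Finset.sum_congr rfl fun i _ => abs_sub_comm (q.val i) (p.val i)]
    exact h
  loopless := by constructor; intro p h; simp [cubeAdj] at h

/-- The prism `G × I_m` over a graph `G`: the product of `G` with a path. -/
def prism {V : Type*} (G : SimpleGraph V) (m : ℕ) : SimpleGraph (V × Fin m) where
  Adj a b := (a.1 = b.1 ∧ (a.2.val + 1 = b.2.val ∨ b.2.val + 1 = a.2.val))
    ∨ (G.Adj a.1 b.1 ∧ a.2 = b.2)
  symm := by
    constructor
    intro a b h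
    rcases h with ⟨h1, h2⟩ | ⟨h1, h2⟩
    · exact Or.inl ⟨h1.symm, h2.symm⟩
    · exact Or.inr ⟨h1.symm, h2.symm⟩
  loopless := by
    constructor
    intro a h
    rcases h with ⟨-, h2⟩ | ⟨h1, -⟩
    · omega
    · exact G.irrefl h1

/-- The turning indicator `η` of a curve at position `k`. -/
def eta {n : ℕ} (b2 b3 : R3) (γ : Fin n → RSeg) (k : Fin n) : ℝ :=
  open scoped Classical in
  if ((γ k).v = b2 ∧ (nextSeg k.pos γ k).v = b3)
      ∨ ((γ k).v = -b3 ∧ (nextSeg k.pos γ k).v = -b2) then 1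
  else if ((γ k).v = -b2 ∧ (nextSeg k.pos γ k).v = -b3)
      ∨ ((γ k).v = b3 ∧ (nextSeg k.pos γ k).v = b2) then -1
  else 0

/-- A box: a rectangular parallelepiped of basic cubes. -/
def IsBox (B : Finset (Fin 3 → ℤ)) : Prop :=
  ∃ lo hi : Fin 3 → ℤ, (∀ i, lo i < hi i) ∧ ∀ q, q ∈ B ↔ ∀ i, lo i ≤ q i ∧ q i < hi i
namespace Statement0Aux

lemma det3_eq (a b c : R3) : det3 a b c =
    a 0 * (b 1 * c 2 - b 2 * c 1) - a 1 * (b 0 * c 2 - b 2 * c 0)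
      + a 2 * (b 0 * c 1 - b 1 * c 0) := by
  simp [det3, Matrix.det_fin_three]; ring

lemma det3_neg_swap (a b c : R3) : det3 b a (-c) = det3 a b c := by
  simp only [det3_eq, Pi.neg_apply]; ring

lemma det3_smul₃ (a b c : R3) (r : ℝ) : det3 a b (r • c) = r * det3 a b c := by
  simp only [det3_eq, Pi.smul_apply, smul_eq_mul]; ring

lemma det3_neg₁ (a b c : R3) : det3 (-a) b c = - det3 a b c := by
  simp only [det3_eq, Pi.neg_apply]; ring

lemma det3_neg₂ (a b c : R3) : det3 a (-b) c = - det3 a b c := by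
  simp only [det3_eq, Pi.neg_apply]; ring

lemma det3_self₁₂ (a c : R3) : det3 a a c = 0 := by
  simp only [det3_eq]; ring

lemma det3_self₁₃ (a b : R3) : det3 a b a = 0 := by
  simp only [det3_eq]; ring

lemma det3_self₂₃ (a b : R3) : det3 a b b = 0 := by
  simp only [det3_eq]; ring

lemma fin3_cases : ∀ i j k m : Fin 3, i ≠ j → i ≠ k → j ≠ k → (m = i ∨ m = j ∨ m = k) := by
  decide

def box (p : Fin 3 → ℤ) (i : Fin 3) : Set R3 :=
  {x | ∀ m, (p m : ℝ) ≤ x m ∧ x m ≤ (p m : ℝ) + (if m = i then 2 else 1)}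

end Statement0Aux
namespace Statement0Aux

lemma stripe_eq (i k : Fin 3) (hik : i ≠ k) (p : Fin 3 → ℤ) (s : ℝ)
    (hs : s = 1 ∨ s = -1) :
    {y : R3 | ∃ x ∈ box p i, ∃ t : ℝ, 0 ≤ t ∧ y = x + t • (s • stdR k)} \ box p i
      = {y : R3 | (∀ m, m ≠ k → (p m : ℝ) ≤ y m ∧ y m ≤ (p m : ℝ) + (if m = i then 2 else 1))
          ∧ s * (p k : ℝ) + (1 + s) / 2 < s * y k} := by
  have hki : ¬ (k = i) := fun h => hik h.symm
  ext y
  simp only [Set.mem_diff, Set.mem_setOf_eq]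
  constructor
  · rintro ⟨⟨x, hx, t, ht, rfl⟩, hy⟩
    have hcoord : ∀ m, (x + t • (s • stdR k)) m = x m + t * s * (if m = k then 1 else 0) := by
      intro m
      simp only [Pi.add_apply, Pi.smul_apply, smul_eq_mul, stdR]
      ring
    refine ⟨fun m hm => ?_, ?_⟩
    · rw [hcoord m, if_neg hm, mul_zero, add_zero]
      exact hx m
    · rw [hcoord k, if_pos rfl, mul_one]
      by_contra hlt
      push_neg at hlt
      apply hy
      intro m
      by_cases hm : m = k
      · subst hm
        rw [hcoord m, if_pos rfl, mul_one, if_neg hki]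
        have hxk := hx m
        rw [if_neg hki] at hxk
        rcases hs with rfl | rfl
        · constructor <;> nlinarith [hxk.1, hxk.2]
        · constructor <;> nlinarith [hxk.1, hxk.2]
      · rw [hcoord m, if_neg hm, mul_zero, add_zero]
        exact hx m
  · rintro ⟨h1, h2⟩
    have hs2 : s * s = 1 := by rcases hs with rfl | rfl <;> norm_num
    refine ⟨⟨fun m => if m = k then (p k : ℝ) else y m, ?_, s * (y k - p k), ?_, ?_⟩, ?_⟩
    · intro m
      by_cases hm : m = k
      · subst hm
        simp only [eq_self_iff_true, if_true]
        constructor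
        · exact le_refl _
        · have : (1:ℝ) ≤ (if m = i then (2:ℝ) else 1) := by split <;> norm_num
          linarith
      · simp only [if_neg hm]
        exact h1 m hm
    · rcases hs with rfl | rfl <;> nlinarith [h2]
    · funext m
      simp only [Pi.add_apply, Pi.smul_apply, smul_eq_mul, stdR]
      by_cases hm : m = k
      · subst hm
        simp only [eq_self_iff_true, if_true]
        linear_combination ((p m : ℝ) - y m) * hs2
      · simp only [if_neg hm, mul_zero, add_zero]
    · intro hy
      have hyk := hy k
      rw [if_neg hki] at hyk
      rcases hs with rfl | rfl
      · nlinarith [hyk.2, h2]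
      · nlinarith [hyk.1, h2]

end Statement0Aux
namespace Statement0Aux

lemma key (i j k : Fin 3) (hij : i ≠ j) (hik : i ≠ k) (hjk : j ≠ k)
    (p q : Fin 3 → ℤ) (s : ℝ) (hs : s = 1 ∨ s = -1) :
    (box q j ∩ shade (s • stdR k) (box p i)).Nonempty ↔
      ((p i ≤ q i ∧ q i ≤ p i + 1) ∧ (p j - 1 ≤ q j ∧ q j ≤ p j)
        ∧ 1 ≤ s * ((q k : ℝ) - (p k : ℝ))) := by
  have hki : ¬ (k = i) := fun h => hik h.symm
  have hji : ¬ (j = i) := fun h => hij h.symm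
  have hij' : ¬ (i = j) := hij
  have hkj : ¬ (k = j) := fun h => hjk h.symm
  rw [shade, stripe_eq i k hik p s hs]
  set St : Set R3 :=
    {y : R3 | (∀ m, m ≠ k → (p m : ℝ) ≤ y m ∧ y m ≤ (p m : ℝ) + (if m = i then 2 else 1))
      ∧ s * (p k : ℝ) + (1 + s) / 2 < s * y k} with hSt
  constructor
  · rintro ⟨y, hyq, hysh⟩
    obtain ⟨ε, hε, hball⟩ := Metric.mem_nhds_iff.mp (mem_interior_iff_mem_nhds.mp hysh)
    have hper : ∀ (m : Fin 3) (δ : ℝ), |δ| < ε →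
        (fun n => y n + δ * (if n = m then 1 else 0)) ∈ St := by
      intro m δ hδ
      apply hball
      rw [Metric.mem_ball, dist_pi_lt_iff hε]
      intro b
      rw [Real.dist_eq]
      have : y b + δ * (if b = m then 1 else 0) - y b = δ * (if b = m then 1 else 0) := by ring
      rw [this]
      calc |δ * (if b = m then 1 else 0)| ≤ |δ| := by
            rcases (by split <;> norm_num : (if b = m then (1:ℝ) else 0) = 1
                ∨ (if b = m then (1:ℝ) else 0) = 0) with h | h <;> rw [h] <;>
              simp [abs_nonneg]
        _ < ε := hδ
    have habs : |ε/2| < ε := by rw [abs_of_pos (by linarith)]; linarith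
    have habs' : |-(ε/2)| < ε := by rw [abs_neg]; exact habs
    -- strict bounds at coordinate i
    have hlo : ∀ m, m ≠ k → (p m : ℝ) < y m := by
      intro m hm
      have h := ((hper m (-(ε/2)) habs').1 m hm).1
      simp only [eq_self_iff_true, if_true] at h
      linarith
    have hhi : ∀ m, m ≠ k → y m < (p m : ℝ) + (if m = i then 2 else 1) := by
      intro m hm
      have h := ((hper m (ε/2) habs).1 m hm).2
      simp only [eq_self_iff_true, if_true] at h
      linarith
    have hyin : y ∈ St := interior_subset hysh
    have hi1 := hlo i hik
    have hi2 := hhi i hik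
    rw [if_pos rfl] at hi2
    have hj1 := hlo j hjk
    have hj2 := hhi j hjk
    rw [if_neg hji] at hj2
    have hk := hyin.2
    have hqi := hyq i
    rw [if_neg hij'] at hqi
    have hqj := hyq j
    rw [if_pos rfl] at hqj
    have hqk := hyq k
    rw [if_neg hkj] at hqk
    refine ⟨⟨?_, ?_⟩, ⟨?_, ?_⟩, ?_⟩
    · have h : ((p i : ℝ)) < ((q i + 1 : ℤ) : ℝ) := by push_cast; linarith [hqi.2]
      have := Int.cast_lt.mp h
      omega
    · have h : ((q i : ℝ)) < ((p i + 2 : ℤ) : ℝ) := by push_cast; linarith [hqi.1]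
      have := Int.cast_lt.mp h
      omega
    · have h : ((p j : ℝ)) < ((q j + 2 : ℤ) : ℝ) := by push_cast; linarith [hqj.2]
      have := Int.cast_lt.mp h
      omega
    · have h : ((q j : ℝ)) < ((p j + 1 : ℤ) : ℝ) := by push_cast; linarith [hqj.1]
      have := Int.cast_lt.mp h
      omega
    · rcases hs with rfl | rfl
      · have : (p k : ℝ) < q k := by linarith [hqk.2, hk]
        have h' := Int.cast_lt.mp this
        have : (1:ℝ) ≤ (q k : ℝ) - (p k : ℝ) := by
          have : p k + 1 ≤ q k := by omega
          have := (by exact_mod_cast this : ((p k + 1 : ℤ) : ℝ) ≤ (q k : ℝ))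
          push_cast at this
          linarith
        linarith
      · have : (q k : ℝ) < p k := by linarith [hqk.1, hk]
        have h' := Int.cast_lt.mp this
        have : (1:ℝ) ≤ (p k : ℝ) - (q k : ℝ) := by
          have : q k + 1 ≤ p k := by omega
          have := (by exact_mod_cast this : ((q k + 1 : ℤ) : ℝ) ≤ (p k : ℝ))
          push_cast at this
          linarith
        linarith
  · rintro ⟨⟨h1, h2⟩, ⟨h3, h4⟩, h5⟩
    have h1' : (p i : ℝ) ≤ q i := by exact_mod_cast h1
    have h2' : (q i : ℝ) ≤ p i + 1 := by exact_mod_cast h2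
    have h3' : (p j : ℝ) - 1 ≤ q j := by exact_mod_cast h3
    have h4' : (q j : ℝ) ≤ p j := by exact_mod_cast h4
    set y : R3 := fun m => if m = j then (p j : ℝ) + 1/2 else (q m : ℝ) + 1/2 with hy
    set O : Set R3 := {x : R3 | ((p i : ℝ) < x i ∧ x i < (p i : ℝ) + 2)
        ∧ ((p j : ℝ) < x j ∧ x j < (p j : ℝ) + 1)
        ∧ s * (p k : ℝ) + (1 + s) / 2 < s * x k} with hO
    have hOopen : IsOpen O := by
      refine IsOpen.inter (IsOpen.inter ?_ ?_) (IsOpen.inter (IsOpen.inter ?_ ?_) ?_)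
      · exact isOpen_lt continuous_const (continuous_apply i)
      · exact isOpen_lt (continuous_apply i) continuous_const
      · exact isOpen_lt continuous_const (continuous_apply j)
      · exact isOpen_lt (continuous_apply j) continuous_const
      · exact isOpen_lt continuous_const (continuous_const.mul (continuous_apply k))
    have hOsub : O ⊆ St := by
      rintro x ⟨⟨ha, hb⟩, ⟨hc, hd⟩, he⟩
      refine ⟨fun m hm => ?_, he⟩
      rcases fin3_cases i j k m hij hik hjk with rfl | rfl | rfl
      · rw [if_pos rfl]; exact ⟨le_of_lt ha, le_of_lt hb⟩
      · rw [if_neg hji]; exact ⟨le_of_lt hc, le_of_lt hd⟩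
      · exact absurd rfl hm
    refine ⟨y, ?_, interior_maximal hOsub hOopen ?_⟩
    · intro m
      by_cases hm : m = j
      · subst hm
        simp only [hy, eq_self_iff_true, if_true, if_pos rfl]
        constructor <;> linarith
      · simp only [hy, if_neg hm]
        have : (1:ℝ) ≤ (if m = j then (2:ℝ) else 1) := by split <;> norm_num
        constructor <;> [linarith; linarith]
    · have hyi : y i = (q i : ℝ) + 1/2 := by simp only [hy, if_neg hij']
      have hyj : y j = (p j : ℝ) + 1/2 := by simp only [hy, eq_self_iff_true, if_true]
      have hyk : y k = (q k : ℝ) + 1/2 := by simp only [hy, if_neg hkj]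
      refine ⟨⟨?_, ?_⟩, ⟨?_, ?_⟩, ?_⟩
      · rw [hyi]; linarith
      · rw [hyi]; linarith
      · rw [hyj]; linarith
      · rw [hyj]; linarith
      · rw [hyk]
        have hexp : s * ((q k : ℝ) + 1/2) = s * (q k : ℝ) + s/2 := by ring
        have h5' : 1 ≤ s * (q k : ℝ) - s * (p k : ℝ) := by
          have : s * ((q k : ℝ) - (p k : ℝ)) = s * (q k : ℝ) - s * (p k : ℝ) := by ring
          linarith [h5, this.symm.le, this.le]
        rw [hexp]
        linarith

end Statement0Aux
namespace Statement0Aux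

lemma cube_union_box (p p' : Fin 3 → ℤ) (i : Fin 3)
    (hp' : ∀ m, p' m = p m + if m = i then 1 else 0) :
    cubeSet p ∪ cubeSet p' = box p i := by
  ext x
  simp only [cubeSet, box, Set.mem_union, Set.mem_setOf_eq]
  constructor
  · rintro (h | h) <;> intro m <;> have hm := h m
    · by_cases hmi : m = i
      · rw [if_pos hmi]; exact ⟨hm.1, by linarith [hm.2]⟩
      · rw [if_neg hmi]; exact hm
    · have hpm : (p' m : ℝ) = p m + if m = i then 1 else 0 := by
        rw [hp' m]; push_cast; split <;> norm_num
      by_cases hmi : m = i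
      · rw [if_pos hmi]
        rw [hpm, if_pos hmi] at hm
        exact ⟨by linarith [hm.1], by linarith [hm.2]⟩
      · rw [if_neg hmi]
        rw [hpm, if_neg hmi, add_zero] at hm
        exact hm
  · intro h
    by_cases hx : x i ≤ (p i : ℝ) + 1
    · left
      intro m
      have hm := h m
      by_cases hmi : m = i
      · subst hmi; exact ⟨hm.1, hx⟩
      · rw [if_neg hmi] at hm; exact hm
    · right
      intro m
      have hm := h m
      have hpm : (p' m : ℝ) = p m + if m = i then 1 else 0 := by
        rw [hp' m]; push_cast; split <;> norm_num
      by_cases hmi : m = i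
      · subst hmi
        rw [if_pos rfl] at hm hpm
        rw [hpm]
        exact ⟨by linarith [not_le.mp hx], by linarith [hm.2]⟩
      · rw [if_neg hmi, add_zero] at hpm
        rw [if_neg hmi] at hm
        rw [hpm]
        exact hm

lemma domino_repr (d : Domino) :
    ∃ (i : Fin 3) (p : Fin 3 → ℤ), d.toSet = box p i ∧ (d.v = stdR i ∨ d.v = -stdR i) := by
  have h := d.adj
  rw [Fin.sum_univ_three] at h
  have big : ((d.c1 0 - d.c2 0 = 1 ∨ d.c1 0 - d.c2 0 = -1) ∧ d.c1 1 = d.c2 1 ∧ d.c1 2 = d.c2 2)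
      ∨ ((d.c1 1 - d.c2 1 = 1 ∨ d.c1 1 - d.c2 1 = -1) ∧ d.c1 0 = d.c2 0 ∧ d.c1 2 = d.c2 2)
      ∨ ((d.c1 2 - d.c2 2 = 1 ∨ d.c1 2 - d.c2 2 = -1) ∧ d.c1 0 = d.c2 0 ∧ d.c1 1 = d.c2 1) := by
    rcases abs_cases (d.c1 0 - d.c2 0) with ⟨e0, f0⟩ | ⟨e0, f0⟩ <;>
      rcases abs_cases (d.c1 1 - d.c2 1) with ⟨e1, f1⟩ | ⟨e1, f1⟩ <;>
      rcases abs_cases (d.c1 2 - d.c2 2) with ⟨e2, f2⟩ | ⟨e2, f2⟩ <;>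
      rw [e0, e1, e2] at h <;> omega
  have key : ∃ i : Fin 3, (d.c1 i - d.c2 i = 1 ∨ d.c1 i - d.c2 i = -1) ∧
      ∀ m, m ≠ i → d.c1 m = d.c2 m := by
    rcases big with ⟨hs, h1, h2⟩ | ⟨hs, h1, h2⟩ | ⟨hs, h1, h2⟩
    · exact ⟨0, hs, by intro m hm; fin_cases m <;> simp_all⟩
    · exact ⟨1, hs, by intro m hm; fin_cases m <;> simp_all⟩
    · exact ⟨2, hs, by intro m hm; fin_cases m <;> simp_all⟩
  obtain ⟨i, hsign, hoth⟩ := key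
  have hvplus : (fun m => (d.c1 m : ℝ) - d.c2 m) = stdR (i := i) →
      True := fun _ => trivial
  rcases hsign with hsign | hsign
  · -- c1 = c2 + e_i : min corner is c2
    refine ⟨i, d.c2, ?_, ?_⟩
    · have : d.toSet = cubeSet d.c2 ∪ cubeSet d.c1 := by
        rw [Domino.toSet, Set.union_comm]
      rw [this]
      apply cube_union_box
      intro m
      by_cases hmi : m = i
      · subst hmi; rw [if_pos rfl]; omega
      · rw [if_neg hmi, add_zero]; exact hoth m hmi
    · have hplus : (fun m => (d.c1 m : ℝ) - d.c2 m) = stdR i := by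
        funext m
        by_cases hmi : m = i
        · subst hmi
          rw [stdR]
          simp only [eq_self_iff_true, if_true]
          have : (d.c1 m : ℝ) - d.c2 m = ((d.c1 m - d.c2 m : ℤ) : ℝ) := by push_cast; ring
          rw [this, hsign]; norm_num
        · rw [stdR]
          simp only [if_neg hmi]
          rw [hoth m hmi]; ring
      have hminus : (fun m => (d.c2 m : ℝ) - d.c1 m) = -stdR i := by
        funext m
        have := congrFun hplus m
        simp only [Pi.neg_apply]
        linarith [this.le, this.ge]
      rw [Domino.v]
      split
      · exact Or.inl hplus
      · exact Or.inr hminus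
  · -- c2 = c1 + e_i : min corner is c1
    refine ⟨i, d.c1, ?_, ?_⟩
    · rw [Domino.toSet]
      apply cube_union_box
      intro m
      by_cases hmi : m = i
      · subst hmi; rw [if_pos rfl]; omega
      · rw [if_neg hmi, add_zero]; exact (hoth m hmi).symm
    · have hplus : (fun m => (d.c2 m : ℝ) - d.c1 m) = stdR i := by
        funext m
        by_cases hmi : m = i
        · subst hmi
          rw [stdR]
          simp only [eq_self_iff_true, if_true]
          have : (d.c2 m : ℝ) - d.c1 m = ((d.c2 m - d.c1 m : ℤ) : ℝ) := by push_cast; ring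
          rw [this]
          have : d.c2 m - d.c1 m = 1 := by omega
          rw [this]; norm_num
        · rw [stdR]
          simp only [if_neg hmi]
          rw [hoth m hmi]; ring
      have hminus : (fun m => (d.c1 m : ℝ) - d.c2 m) = -stdR i := by
        funext m
        have := congrFun hplus m
        simp only [Pi.neg_apply]
        linarith [this.le, this.ge]
      rw [Domino.v]
      split
      · exact Or.inr hminus
      · exact Or.inl hplus

end Statement0Aux
open Statement0Aux in
theorem statement0 (d0 d1 : Domino) (u : R3) (hu : u ∈ PhiR) :
    tau u d0 d1 = tau (-u) d1 d0 := by
  classical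
  obtain ⟨i, p, hset0, hv0⟩ := domino_repr d0
  obtain ⟨j, q, hset1, hv1⟩ := domino_repr d1
  obtain ⟨k, hk⟩ := hu
  obtain ⟨s, hs, hu'⟩ : ∃ s : ℝ, (s = 1 ∨ s = -1) ∧ u = s • stdR k := by
    rcases hk with rfl | rfl
    · exact ⟨1, Or.inl rfl, (one_smul _ _).symm⟩
    · exact ⟨-1, Or.inr rfl, by funext m; simp [Pi.neg_apply, Pi.smul_apply]⟩
  have hDswap : det3 d0.v d1.v (-u) = det3 d1.v d0.v u := det3_neg_swap _ _ _
  by_cases hD : det3 d1.v d0.v u = 0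
  · rw [tau, tau, hDswap, hD]
    split_ifs <;> norm_num
  · have hij : i ≠ j := by
      rintro rfl
      apply hD
      rcases hv0 with h0 | h0 <;> rcases hv1 with h1 | h1 <;>
        simp [h0, h1, det3_neg₁, det3_neg₂, det3_self₁₂]
    have hik : i ≠ k := by
      rintro rfl
      apply hD
      rw [hu']
      rcases hv0 with h0 | h0 <;>
        simp [h0, det3_smul₃, det3_neg₂, det3_self₂₃]
    have hjk : j ≠ k := by
      rintro rfl
      apply hD
      rw [hu']
      rcases hv1 with h1 | h1 <;>
        simp [h1, det3_smul₃, det3_neg₁, det3_self₁₃]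
    have hneg : -u = (-s) • stdR k := by rw [hu', neg_smul]
    have hcond1 := key i j k hij hik hjk p q s hs
    have hcond2 := key j i k hij.symm hjk hik q p (-s)
      (by rcases hs with rfl | rfl <;> norm_num)
    have hiff : (d1.toSet ∩ shade u d0.toSet).Nonempty ↔
        (d0.toSet ∩ shade (-u) d1.toSet).Nonempty := by
      rw [hset0, hset1, hneg, hu', hcond1, hcond2]
      have harith : (-s) * ((p k : ℝ) - (q k : ℝ)) = s * ((q k : ℝ) - (p k : ℝ)) := by ring
      rw [harith]
      constructor
      · rintro ⟨⟨a, b⟩, ⟨c, d⟩, e⟩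
        exact ⟨⟨by omega, by omega⟩, ⟨by omega, by omega⟩, e⟩
      · rintro ⟨⟨a, b⟩, ⟨c, d⟩, e⟩
        exact ⟨⟨by omega, by omega⟩, ⟨by omega, by omega⟩, e⟩
    rw [tau, tau, hDswap]
    exact if_congr hiff rfl rfl
end
end

section
/- Let w ∈ {e1,e2,e3} and let r: R^3 → R^3 be the reflection p ↦ p − 2(p·w)w. If t is a tiling of a region R and u ∈ Φ, then the reflected tiling r(t) of r(R) satisfies T^u(r(t)) = −T^u(t). -/
open scoped BigOperators
noncomputable section

namespace MS

lemma det3_expand (a b c : R3) : det3 a b c =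
    a 0 * b 1 * c 2 - a 0 * b 2 * c 1 - a 1 * b 0 * c 2 + a 1 * b 2 * c 0
      + a 2 * b 0 * c 1 - a 2 * b 1 * c 0 := by
  simp [det3, Matrix.det_fin_three]

def rmap (k : Fin 3) (x : R3) : R3 := fun i => if i = k then -x i else x i

lemma rmap_invol (k : Fin 3) (x : R3) : rmap k (rmap k x) = x := by
  funext i; by_cases h : i = k <;> simp [rmap, h]

lemma det3_rswap (k : Fin 3) (a b c : R3) :
    det3 (fun i => if i = k then a i else -a i) (fun i => if i = k then b i else -b i) c
      = - det3 a b (rmap k c) := by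
  fin_cases k <;> simp [det3_expand, rmap] <;> ring

lemma det3_swap (a b c : R3) : det3 a b c = - det3 b a c := by
  simp [det3_expand]; ring

lemma det3_negc (a b c : R3) : det3 a b (-c) = - det3 a b c := by
  simp [det3_expand]; ring

lemma det3_cc (a c : R3) : det3 a c c = 0 := by simp [det3_expand]; ring

lemma det3_negcc (a c : R3) : det3 a (-c) c = 0 := by simp [det3_expand]; ring

/-- The long axis of a domino. -/
lemma domino_axis (d : Domino) :
    ∃ j, (∀ i, i ≠ j → d.c1 i = d.c2 i) ∧ (d.c1 j - d.c2 j = 1 ∨ d.c1 j - d.c2 j = -1) := by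
  have hadj := d.adj
  rw [Fin.sum_univ_three] at hadj
  have h0 := abs_nonneg (d.c1 0 - d.c2 0)
  have h1 := abs_nonneg (d.c1 1 - d.c2 1)
  have h2 := abs_nonneg (d.c1 2 - d.c2 2)
  have key : (|d.c1 0 - d.c2 0| = 1 ∧ |d.c1 1 - d.c2 1| = 0 ∧ |d.c1 2 - d.c2 2| = 0)
      ∨ (|d.c1 0 - d.c2 0| = 0 ∧ |d.c1 1 - d.c2 1| = 1 ∧ |d.c1 2 - d.c2 2| = 0)
      ∨ (|d.c1 0 - d.c2 0| = 0 ∧ |d.c1 1 - d.c2 1| = 0 ∧ |d.c1 2 - d.c2 2| = 1) := by omega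
  have habs : ∀ x : ℤ, |x| = 1 → x = 1 ∨ x = -1 := fun x hx => by
    rcases (abs_eq (by norm_num : (0:ℤ) ≤ 1)).mp hx with h | h <;> simp [h]
  have hzero : ∀ x y : ℤ, |x - y| = 0 → x = y := fun x y hx => by
    have := abs_eq_zero.mp hx; omega
  rcases key with ⟨ha, hb, hc⟩ | ⟨ha, hb, hc⟩ | ⟨ha, hb, hc⟩
  · refine ⟨0, ?_, habs _ ha⟩
    intro i hi; fin_cases i
    · simp at hi
    · exact hzero _ _ hb
    · exact hzero _ _ hc
  · refine ⟨1, ?_, habs _ hb⟩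
    intro i hi; fin_cases i
    · exact hzero _ _ ha
    · simp at hi
    · exact hzero _ _ hc
  · refine ⟨2, ?_, habs _ hc⟩
    intro i hi; fin_cases i
    · exact hzero _ _ ha
    · exact hzero _ _ hb
    · simp at hi

def dlo (d : Domino) (i : Fin 3) : ℤ := min (d.c1 i) (d.c2 i)
def dhi (d : Domino) (i : Fin 3) : ℤ := max (d.c1 i) (d.c2 i) + 1

lemma dlo_lt_dhi (d : Domino) (i : Fin 3) : dlo d i < dhi d i := by
  simp [dlo, dhi]

lemma dlo_lt_dhi' (d : Domino) (i : Fin 3) : ((dlo d i : ℝ)) < dhi d i := by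
  exact_mod_cast dlo_lt_dhi d i

/-- A domino is a box. -/
lemma toSet_eq (d : Domino) :
    d.toSet = Set.pi Set.univ (fun i => Set.Icc (dlo d i : ℝ) (dhi d i)) := by
  obtain ⟨j, hoth, hdiff⟩ := domino_axis d
  ext x
  simp only [Domino.toSet, cubeSet, Set.mem_union, Set.mem_setOf_eq, Set.mem_pi,
    Set.mem_univ, forall_true_left, Set.mem_Icc]
  constructor
  · rintro (h | h) i <;> have hi := h i
    · have l1 : (dlo d i : ℝ) ≤ d.c1 i := by exact_mod_cast min_le_left _ _
      have l2 : ((d.c1 i : ℝ) + 1) ≤ dhi d i := by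
        have : (d.c1 i : ℤ) + 1 ≤ dhi d i := by simp only [dhi]; omega
        exact_mod_cast this
      exact ⟨by linarith [hi.1], by linarith [hi.2]⟩
    · have l1 : (dlo d i : ℝ) ≤ d.c2 i := by exact_mod_cast min_le_right _ _
      have l2 : ((d.c2 i : ℝ) + 1) ≤ dhi d i := by
        have : (d.c2 i : ℤ) + 1 ≤ dhi d i := by simp only [dhi]; omega
        exact_mod_cast this
      exact ⟨by linarith [hi.1], by linarith [hi.2]⟩
  · intro h
    have hothR : ∀ i, i ≠ j → (d.c1 i : ℝ) = d.c2 i := fun i hi => by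
      exact_mod_cast congrArg (fun z : ℤ => (z : ℝ)) (hoth i hi)
    have hside1 : ∀ i, i ≠ j → (d.c1 i : ℝ) ≤ x i ∧ x i ≤ (d.c1 i : ℝ) + 1 := by
      intro i hi
      have e1 : ((dlo d i : ℤ) : ℝ) = ((d.c1 i : ℤ) : ℝ) := by
        have : dlo d i = d.c1 i := by simp [dlo, hoth i hi]
        exact_mod_cast this
      have e2 : ((dhi d i : ℤ) : ℝ) = (d.c1 i : ℝ) + 1 := by
        have : dhi d i = d.c1 i + 1 := by simp [dhi, hoth i hi]
        rw [this]; push_cast; ring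
      have h1 := (h i).1; have h2 := (h i).2
      rw [e1] at h1; rw [e2] at h2; exact ⟨h1, h2⟩
    have hside2 : ∀ i, i ≠ j → (d.c2 i : ℝ) ≤ x i ∧ x i ≤ (d.c2 i : ℝ) + 1 := by
      intro i hi; rw [← hothR i hi]; exact hside1 i hi
    rcases hdiff with hd | hd
    · -- c1 j = c2 j + 1 : dlo j = c2 j, dhi j = c1 j + 1
      have hloj : ((dlo d j : ℤ) : ℝ) = d.c2 j := by
        have : dlo d j = d.c2 j := by simp [dlo]; omega
        exact_mod_cast this
      have hhij : ((dhi d j : ℤ) : ℝ) = (d.c1 j : ℝ) + 1 := by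
        have : dhi d j = d.c1 j + 1 := by simp only [dhi]; omega
        rw [this]; push_cast; ring
      have hc12 : (d.c1 j : ℝ) = (d.c2 j : ℝ) + 1 := by
        exact_mod_cast congrArg (fun z : ℤ => (z : ℝ)) (by omega : d.c1 j = d.c2 j + 1)
      by_cases hx : x j ≤ (d.c2 j : ℝ) + 1
      · right; intro i
        by_cases hij : i = j
        · rw [hij]
          refine ⟨?_, hx⟩
          have := (h j).1; rw [hloj] at this; exact this
        · exact hside2 i hij
      · left; intro i
        by_cases hij : i = j
        · rw [hij]
          constructor
          · linarith
          · have := (h j).2; rw [hhij] at this; exact this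
        · exact hside1 i hij
    · -- c2 j = c1 j + 1
      have hloj : ((dlo d j : ℤ) : ℝ) = d.c1 j := by
        have : dlo d j = d.c1 j := by simp [dlo]; omega
        exact_mod_cast this
      have hhij : ((dhi d j : ℤ) : ℝ) = (d.c2 j : ℝ) + 1 := by
        have : dhi d j = d.c2 j + 1 := by simp only [dhi]; omega
        rw [this]; push_cast; ring
      have hc12 : (d.c2 j : ℝ) = (d.c1 j : ℝ) + 1 := by
        exact_mod_cast congrArg (fun z : ℤ => (z : ℝ)) (by omega : d.c2 j = d.c1 j + 1)
      by_cases hx : x j ≤ (d.c1 j : ℝ) + 1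
      · left; intro i
        by_cases hij : i = j
        · rw [hij]
          refine ⟨?_, hx⟩
          have := (h j).1; rw [hloj] at this; exact this
        · exact hside1 i hij
      · right; intro i
        by_cases hij : i = j
        · rw [hij]
          constructor
          · linarith
          · have := (h j).2; rw [hhij] at this; exact this
        · exact hside2 i hij

end MS
namespace MS

def cyl (u : R3) (X : Set R3) : Set R3 := {y | ∃ x ∈ X, ∃ s : ℝ, 0 ≤ s ∧ y = x + s • u}

lemma shade_def (u : R3) (X : Set R3) : shade u X = interior (cyl u X \ X) := rfl

def boxP (lo hi : Fin 3 → ℝ) : Set R3 := Set.pi Set.univ fun i => Set.Icc (lo i) (hi i)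

lemma mem_boxP {lo hi : Fin 3 → ℝ} {x : R3} :
    x ∈ boxP lo hi ↔ ∀ i, lo i ≤ x i ∧ x i ≤ hi i := by
  simp only [boxP, Set.mem_pi, Set.mem_univ, forall_true_left, Set.mem_Icc]

lemma cyl_diff_pos (lo hi : Fin 3 → ℝ) (hlt : ∀ i, lo i ≤ hi i) (m : Fin 3) :
    cyl (stdR m) (boxP lo hi) \ boxP lo hi
      = Set.pi Set.univ (fun i => if i = m then Set.Ioi (hi m) else Set.Icc (lo i) (hi i)) := by
  ext y
  simp only [Set.mem_diff, cyl, Set.mem_setOf_eq, Set.mem_pi, Set.mem_univ, forall_true_left]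
  constructor
  · rintro ⟨⟨x, hx, s, hs, rfl⟩, hnot⟩
    rw [mem_boxP] at hx
    have hval : ∀ i, (x + s • stdR m) i = x i + s * (if i = m then 1 else 0) := by
      intro i; simp [stdR, Pi.add_apply, Pi.smul_apply, smul_eq_mul]
    intro i
    by_cases him : i = m
    · subst him
      rw [if_pos rfl, Set.mem_Ioi, hval i, if_pos rfl]
      by_contra hle
      push_neg at hle
      apply hnot
      rw [mem_boxP]
      intro j
      rw [hval j]
      by_cases hjm : j = i
      · subst hjm
        rw [if_pos rfl]
        exact ⟨by nlinarith [(hx j).1], by linarith⟩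
      · rw [if_neg hjm]
        exact ⟨by linarith [(hx j).1], by linarith [(hx j).2]⟩
    · rw [if_neg him, hval i, if_neg him, Set.mem_Icc]
      exact ⟨by linarith [(hx i).1], by linarith [(hx i).2]⟩
  · intro hy
    have hym : hi m < y m := by have := hy m; rwa [if_pos rfl, Set.mem_Ioi] at this
    refine ⟨⟨fun i => if i = m then lo m else y i, ?_, y m - lo m, by linarith [hlt m], ?_⟩, ?_⟩
    · rw [mem_boxP]
      intro i
      by_cases him : i = m
      · subst him; rw [if_pos rfl]; exact ⟨le_refl _, hlt i⟩
      · rw [if_neg him]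
        have := hy i; rw [if_neg him, Set.mem_Icc] at this; exact this
    · funext i
      by_cases him : i = m
      · subst him
        simp [stdR, Pi.add_apply, Pi.smul_apply, smul_eq_mul]
      · simp [stdR, him, Pi.add_apply, Pi.smul_apply, smul_eq_mul]
    · intro hmem
      rw [mem_boxP] at hmem
      linarith [(hmem m).2]

lemma cyl_diff_neg (lo hi : Fin 3 → ℝ) (hlt : ∀ i, lo i ≤ hi i) (m : Fin 3) :
    cyl (-stdR m) (boxP lo hi) \ boxP lo hi
      = Set.pi Set.univ (fun i => if i = m then Set.Iio (lo m) else Set.Icc (lo i) (hi i)) := by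
  ext y
  simp only [Set.mem_diff, cyl, Set.mem_setOf_eq, Set.mem_pi, Set.mem_univ, forall_true_left]
  constructor
  · rintro ⟨⟨x, hx, s, hs, rfl⟩, hnot⟩
    rw [mem_boxP] at hx
    have hval : ∀ i, (x + s • (-stdR m)) i = x i - s * (if i = m then 1 else 0) := by
      intro i; simp [stdR, Pi.add_apply, Pi.smul_apply, Pi.neg_apply, smul_eq_mul]; ring
    intro i
    by_cases him : i = m
    · subst him
      rw [if_pos rfl, Set.mem_Iio, hval i, if_pos rfl]
      by_contra hle
      push_neg at hle
      apply hnot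
      rw [mem_boxP]
      intro j
      rw [hval j]
      by_cases hjm : j = i
      · subst hjm
        rw [if_pos rfl]
        exact ⟨by linarith, by nlinarith [(hx j).2]⟩
      · rw [if_neg hjm]
        exact ⟨by linarith [(hx j).1], by linarith [(hx j).2]⟩
    · rw [if_neg him, hval i, if_neg him, Set.mem_Icc]
      exact ⟨by linarith [(hx i).1], by linarith [(hx i).2]⟩
  · intro hy
    have hym : y m < lo m := by have := hy m; rwa [if_pos rfl, Set.mem_Iio] at this
    refine ⟨⟨fun i => if i = m then hi m else y i, ?_, hi m - y m, by linarith [hlt m], ?_⟩, ?_⟩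
    · rw [mem_boxP]
      intro i
      by_cases him : i = m
      · subst him; rw [if_pos rfl]; exact ⟨hlt i, le_refl _⟩
      · rw [if_neg him]
        have := hy i; rw [if_neg him, Set.mem_Icc] at this; exact this
    · funext i
      by_cases him : i = m
      · subst him
        simp [stdR, Pi.add_apply, Pi.smul_apply, Pi.neg_apply, smul_eq_mul]
      · simp [stdR, him, Pi.add_apply, Pi.smul_apply, Pi.neg_apply, smul_eq_mul]
    · intro hmem
      rw [mem_boxP] at hmem
      linarith [(hmem m).1]

lemma shade_box_pos (lo hi : Fin 3 → ℝ) (hlt : ∀ i, lo i ≤ hi i) (m : Fin 3) :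
    shade (stdR m) (boxP lo hi)
      = Set.pi Set.univ (fun i => if i = m then Set.Ioi (hi m) else Set.Ioo (lo i) (hi i)) := by
  rw [shade_def, cyl_diff_pos lo hi hlt m, interior_pi_set Set.finite_univ]
  refine congrArg (Set.pi Set.univ) (funext fun i => ?_)
  by_cases h : i = m <;> simp [h]

lemma shade_box_neg (lo hi : Fin 3 → ℝ) (hlt : ∀ i, lo i ≤ hi i) (m : Fin 3) :
    shade (-stdR m) (boxP lo hi)
      = Set.pi Set.univ (fun i => if i = m then Set.Iio (lo m) else Set.Ioo (lo i) (hi i)) := by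
  rw [shade_def, cyl_diff_neg lo hi hlt m, interior_pi_set Set.finite_univ]
  refine congrArg (Set.pi Set.univ) (funext fun i => ?_)
  by_cases h : i = m <;> simp [h]

lemma Icc_Ioi_ne (a b c : ℝ) (h : a ≤ b) : (Set.Icc a b ∩ Set.Ioi c).Nonempty ↔ c < b := by
  constructor
  · rintro ⟨x, ⟨_, hxb⟩, hxc⟩; exact lt_of_lt_of_le hxc hxb
  · intro hc; exact ⟨b, ⟨h, le_refl _⟩, hc⟩

lemma Icc_Iio_ne (a b c : ℝ) (h : a ≤ b) : (Set.Icc a b ∩ Set.Iio c).Nonempty ↔ a < c := by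
  constructor
  · rintro ⟨x, ⟨hxa, _⟩, hxc⟩; exact lt_of_le_of_lt hxa hxc
  · intro hc; exact ⟨a, ⟨le_refl _, h⟩, hc⟩

lemma Icc_Ioo_ne (a b c d : ℝ) (h1 : a ≤ b) (h2 : c < d) :
    (Set.Icc a b ∩ Set.Ioo c d).Nonempty ↔ c < b ∧ a < d := by
  constructor
  · rintro ⟨x, ⟨hxa, hxb⟩, hxc, hxd⟩
    exact ⟨lt_of_lt_of_le hxc hxb, lt_of_le_of_lt hxa hxd⟩
  · rintro ⟨hcb, had⟩
    by_cases hca : c < a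
    · exact ⟨a, ⟨le_refl _, h1⟩, hca, had⟩
    · push_neg at hca
      refine ⟨min b ((c + d) / 2), ⟨le_min h1 (by linarith), min_le_left _ _⟩,
        lt_min hcb (by linarith), lt_of_le_of_lt (min_le_right _ _) (by linarith)⟩

lemma toSet_boxP (d : Domino) :
    d.toSet = boxP (fun i => (dlo d i : ℝ)) (fun i => (dhi d i : ℝ)) := toSet_eq d

lemma inter_shade_pos (d0 d1 : Domino) (m : Fin 3) :
    (d1.toSet ∩ shade (stdR m) d0.toSet).Nonempty ↔
      ((∀ i, i ≠ m → ((dlo d0 i : ℝ) < dhi d1 i ∧ (dlo d1 i : ℝ) < dhi d0 i))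
        ∧ (dhi d0 m : ℝ) < dhi d1 m) := by
  rw [toSet_boxP d1, toSet_boxP d0,
    shade_box_pos _ _ (fun i => (dlo_lt_dhi' d0 i).le) m]
  rw [boxP, ← Set.pi_inter_distrib, Set.univ_pi_nonempty_iff]
  constructor
  · intro h
    refine ⟨fun i hi => ?_, ?_⟩
    · have := h i; rw [if_neg hi] at this
      exact (Icc_Ioo_ne _ _ _ _ (dlo_lt_dhi' d1 i).le (dlo_lt_dhi' d0 i)).mp this
    · have := h m; rw [if_pos rfl] at this
      exact (Icc_Ioi_ne _ _ _ (dlo_lt_dhi' d1 m).le).mp this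
  · rintro ⟨hf, hm⟩ i
    by_cases hi : i = m
    · subst hi; rw [if_pos rfl]
      exact (Icc_Ioi_ne _ _ _ (dlo_lt_dhi' d1 i).le).mpr hm
    · rw [if_neg hi]
      exact (Icc_Ioo_ne _ _ _ _ (dlo_lt_dhi' d1 i).le (dlo_lt_dhi' d0 i)).mpr (hf i hi)

lemma inter_shade_neg (d0 d1 : Domino) (m : Fin 3) :
    (d1.toSet ∩ shade (-stdR m) d0.toSet).Nonempty ↔
      ((∀ i, i ≠ m → ((dlo d0 i : ℝ) < dhi d1 i ∧ (dlo d1 i : ℝ) < dhi d0 i))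
        ∧ (dlo d1 m : ℝ) < dlo d0 m) := by
  rw [toSet_boxP d1, toSet_boxP d0,
    shade_box_neg _ _ (fun i => (dlo_lt_dhi' d0 i).le) m]
  rw [boxP, ← Set.pi_inter_distrib, Set.univ_pi_nonempty_iff]
  constructor
  · intro h
    refine ⟨fun i hi => ?_, ?_⟩
    · have := h i; rw [if_neg hi] at this
      exact (Icc_Ioo_ne _ _ _ _ (dlo_lt_dhi' d1 i).le (dlo_lt_dhi' d0 i)).mp this
    · have := h m; rw [if_pos rfl] at this
      exact (Icc_Iio_ne _ _ _ (dlo_lt_dhi' d1 m).le).mp this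
  · rintro ⟨hf, hm⟩ i
    by_cases hi : i = m
    · subst hi; rw [if_pos rfl]
      exact (Icc_Iio_ne _ _ _ (dlo_lt_dhi' d1 i).le).mpr hm
    · rw [if_neg hi]
      exact (Icc_Ioo_ne _ _ _ _ (dlo_lt_dhi' d1 i).le (dlo_lt_dhi' d0 i)).mpr (hf i hi)

end MS
namespace MS

lemma det3_cbc (b c : R3) : det3 c b c = 0 := by simp [det3_expand]; ring

lemma det3_negcbc (b c : R3) : det3 (-c) b c = 0 := by simp [det3_expand]; ring

lemma v_cases (d : Domino) :
    d.v = (fun i => (d.c1 i : ℝ) - d.c2 i) ∨ d.v = (fun i => (d.c2 i : ℝ) - d.c1 i) := by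
  by_cases h : cubeBlack d.c1
  · left; simp [Domino.v, h]
  · right; simp [Domino.v, h]

lemma v_axis (d : Domino) (m : Fin 3) (hne : d.c1 m ≠ d.c2 m) :
    d.v = stdR m ∨ d.v = -stdR m := by
  obtain ⟨j, hoth, hdiff⟩ := domino_axis d
  have hjm : j = m := by
    by_contra hj
    exact hne (hoth m (fun h => hj h.symm))
  subst hjm
  have hzero : ∀ i, i ≠ j → (d.c1 i : ℝ) - d.c2 i = 0 := fun i hi => by rw [hoth i hi]; ring
  have hzero' : ∀ i, i ≠ j → (d.c2 i : ℝ) - d.c1 i = 0 := fun i hi => by rw [hoth i hi]; ring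
  rcases v_cases d with hv | hv <;> rcases hdiff with hd | hd
  · left; rw [hv]; funext i
    by_cases hij : i = j
    · subst hij; simp [stdR]
      have : ((d.c1 i - d.c2 i : ℤ) : ℝ) = 1 := by rw [hd]; norm_num
      push_cast at this; linarith
    · simp only [stdR, if_neg hij]; exact hzero i hij
  · right; rw [hv]; funext i
    by_cases hij : i = j
    · subst hij; simp [Pi.neg_apply, stdR]
      have : ((d.c1 i - d.c2 i : ℤ) : ℝ) = -1 := by rw [hd]; norm_num
      push_cast at this; linarith
    · simp only [Pi.neg_apply, stdR, if_neg hij, neg_zero]; exact hzero i hij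
  · right; rw [hv]; funext i
    by_cases hij : i = j
    · subst hij; simp [Pi.neg_apply, stdR]
      have : ((d.c1 i - d.c2 i : ℤ) : ℝ) = 1 := by rw [hd]; norm_num
      push_cast at this; linarith
    · simp only [Pi.neg_apply, stdR, if_neg hij, neg_zero]; exact hzero' i hij
  · left; rw [hv]; funext i
    by_cases hij : i = j
    · subst hij; simp [stdR]
      have : ((d.c1 i - d.c2 i : ℤ) : ℝ) = -1 := by rw [hd]; norm_num
      push_cast at this; linarith
    · simp only [stdR, if_neg hij]; exact hzero' i hij

lemma det_ne_imp (d0 d1 : Domino) (m : Fin 3) (h : det3 d1.v d0.v (stdR m) ≠ 0) :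
    d0.c1 m = d0.c2 m ∧ d1.c1 m = d1.c2 m := by
  constructor
  · by_contra hne
    rcases v_axis d0 m hne with hv | hv <;> rw [hv] at h
    · exact h (det3_cc _ _)
    · exact h (det3_negcc _ _)
  · by_contra hne
    rcases v_axis d1 m hne with hv | hv <;> rw [hv] at h
    · exact h (det3_cbc _ _)
    · exact h (det3_negcbc _ _)

lemma extent (d : Domino) (m : Fin 3) (heq : d.c1 m = d.c2 m) :
    dhi d m = dlo d m + 1 := by simp [dhi, dlo, heq]

lemma tau_neg_swap (m : Fin 3) (d0 d1 : Domino) :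
    tau (-stdR m) d0 d1 = tau (stdR m) d1 d0 := by
  have hD : det3 d1.v d0.v (-stdR m) = det3 d0.v d1.v (stdR m) := by
    rw [det3_negc, det3_swap d0.v d1.v (stdR m)]
  by_cases hz : det3 d1.v d0.v (stdR m) = 0
  · have h1 : det3 d1.v d0.v (-stdR m) = 0 := by rw [det3_negc, hz, neg_zero]
    have h2 : det3 d0.v d1.v (stdR m) = 0 := by rw [det3_swap d0.v d1.v (stdR m), hz, neg_zero]
    simp only [tau]
    split_ifs <;> simp [h1, h2]
  · obtain ⟨h0m, h1m⟩ := det_ne_imp d0 d1 m hz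
    have e0 := extent d0 m h0m
    have e1 := extent d1 m h1m
    have hC : (d1.toSet ∩ shade (-stdR m) d0.toSet).Nonempty
        ↔ (d0.toSet ∩ shade (stdR m) d1.toSet).Nonempty := by
      rw [inter_shade_neg, inter_shade_pos]
      constructor
      · rintro ⟨hf, hm⟩
        refine ⟨fun i hi => ⟨(hf i hi).2, (hf i hi).1⟩, ?_⟩
        have h1 : dlo d1 m < dlo d0 m := by exact_mod_cast hm
        have h2 : dhi d1 m < dhi d0 m := by omega
        exact_mod_cast h2
      · rintro ⟨hf, hm⟩
        refine ⟨fun i hi => ⟨(hf i hi).2, (hf i hi).1⟩, ?_⟩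
        have h1 : dhi d1 m < dhi d0 m := by exact_mod_cast hm
        have h2 : dlo d1 m < dlo d0 m := by omega
        exact_mod_cast h2
    by_cases hc : (d1.toSet ∩ shade (-stdR m) d0.toSet).Nonempty
    · simp only [tau, if_pos hc, if_pos (hC.mp hc), hD]
    · simp only [tau, if_neg hc, if_neg (fun h => hc (hC.mpr h))]

lemma T_neg (m : Fin 3) (t : Finset Domino) : T (-stdR m) t = T (stdR m) t := by
  unfold T
  calc ∑ d0 ∈ t, ∑ d1 ∈ t, tau (-stdR m) d0 d1
      = ∑ d0 ∈ t, ∑ d1 ∈ t, tau (stdR m) d1 d0 :=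
        Finset.sum_congr rfl fun d0 _ => Finset.sum_congr rfl fun d1 _ => tau_neg_swap m d0 d1
    _ = ∑ d1 ∈ t, ∑ d0 ∈ t, tau (stdR m) d1 d0 := Finset.sum_comm

end MS
namespace MS

lemma rmap_linear (k : Fin 3) (x v : R3) (s : ℝ) :
    rmap k (x + s • v) = rmap k x + s • rmap k v := by
  funext i
  by_cases h : i = k <;>
    simp [rmap, h, Pi.add_apply, Pi.smul_apply, smul_eq_mul] <;> ring

lemma rmap_cont (k : Fin 3) : Continuous (rmap k) := by
  apply continuous_pi
  intro i
  by_cases h : i = k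
  · simp only [rmap, if_pos h]
    exact (continuous_apply i).neg
  · simp only [rmap, if_neg h]
    exact continuous_apply i

def rhomeo (k : Fin 3) : Homeomorph R3 R3 :=
  ⟨⟨rmap k, rmap k, rmap_invol k, rmap_invol k⟩, rmap_cont k, rmap_cont k⟩

lemma preim_interior (k : Fin 3) (S : Set R3) :
    rmap k ⁻¹' interior S = interior (rmap k ⁻¹' S) :=
  (rhomeo k).preimage_interior S

lemma cubeSet_reflCube (k : Fin 3) (q : Fin 3 → ℤ) :
    cubeSet (reflCube k q) = rmap k ⁻¹' cubeSet q := by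
  ext x
  simp only [cubeSet, Set.mem_preimage, Set.mem_setOf_eq]
  constructor
  · intro h i
    by_cases hik : i = k
    · subst hik
      have := h i
      simp only [reflCube, if_pos rfl] at this
      simp only [rmap, if_pos rfl]
      push_cast at this ⊢
      exact ⟨by linarith [this.1, this.2], by linarith [this.1, this.2]⟩
    · have := h i
      simp only [reflCube, if_neg hik] at this
      simp only [rmap, if_neg hik]
      exact this
  · intro h i
    by_cases hik : i = k
    · subst hik
      have := h i
      simp only [rmap, if_pos rfl] at this
      simp only [reflCube, if_pos rfl]
      push_cast at this ⊢
      exact ⟨by linarith [this.1, this.2], by linarith [this.1, this.2]⟩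
    · have := h i
      simp only [rmap, if_neg hik] at this
      simp only [reflCube, if_neg hik]
      exact this

lemma reflect_c1 (d : Domino) (k : Fin 3) : (d.reflect k).c1 = reflCube k d.c1 := rfl
lemma reflect_c2 (d : Domino) (k : Fin 3) : (d.reflect k).c2 = reflCube k d.c2 := rfl

lemma toSet_reflect (d : Domino) (k : Fin 3) :
    (d.reflect k).toSet = rmap k ⁻¹' d.toSet := by
  simp only [Domino.toSet, reflect_c1, reflect_c2, cubeSet_reflCube, Set.preimage_union]

lemma cyl_rpre (k : Fin 3) (u : R3) (X : Set R3) :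
    cyl u (rmap k ⁻¹' X) = rmap k ⁻¹' cyl (rmap k u) X := by
  ext y
  simp only [cyl, Set.mem_preimage, Set.mem_setOf_eq]
  constructor
  · rintro ⟨x, hx, s, hs, rfl⟩
    exact ⟨rmap k x, hx, s, hs, by rw [rmap_linear]⟩
  · rintro ⟨x, hx, s, hs, hy⟩
    refine ⟨rmap k x, by rwa [rmap_invol], s, hs, ?_⟩
    have := congrArg (rmap k) hy
    rw [rmap_invol, rmap_linear, rmap_invol] at this
    exact this

lemma shade_rpre (k : Fin 3) (u : R3) (X : Set R3) :
    shade u (rmap k ⁻¹' X) = rmap k ⁻¹' shade (rmap k u) X := by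
  rw [shade_def, shade_def, cyl_rpre, ← Set.preimage_diff, ← preim_interior]

lemma cubeBlack_reflCube (k : Fin 3) (q : Fin 3 → ℤ) :
    cubeBlack (reflCube k q) ↔ ¬ cubeBlack q := by
  fin_cases k <;>
    · simp only [cubeBlack, reflCube, Int.odd_iff]
      norm_num [Fin.ext_iff]
      omega

lemma v_reflect (d : Domino) (k : Fin 3) :
    (d.reflect k).v = fun i => if i = k then d.v i else -(d.v i) := by
  by_cases h : cubeBlack d.c1
  · have h' : ¬ cubeBlack (reflCube k d.c1) := by
      rw [cubeBlack_reflCube]; exact not_not_intro h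
    funext i
    simp only [Domino.v, if_neg h', if_pos h, reflect_c1, reflect_c2]
    refine (congrFun (if_neg h') i).trans ?_
    by_cases hik : i = k
    · subst hik
      simp only [reflCube, if_pos rfl]
      push_cast
      ring
    · simp only [reflCube, if_neg hik]
      push_cast
      ring
  · have h' : cubeBlack (reflCube k d.c1) := by
      rw [cubeBlack_reflCube]; exact h
    funext i
    simp only [Domino.v, if_pos h', if_neg h, reflect_c1, reflect_c2]
    refine (congrFun (if_pos h') i).trans ?_
    by_cases hik : i = k
    · subst hik
      simp only [reflCube, if_pos rfl]
      push_cast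
      ring
    · simp only [reflCube, if_neg hik]
      push_cast
      ring

lemma tau_reflect (k : Fin 3) (u : R3) (d0 d1 : Domino) :
    tau u (d0.reflect k) (d1.reflect k) = - tau (rmap k u) d0 d1 := by
  have hval : det3 (d1.reflect k).v (d0.reflect k).v u = - det3 d1.v d0.v (rmap k u) := by
    rw [v_reflect, v_reflect]
    exact det3_rswap k d1.v d0.v u
  have hcond : ((d1.reflect k).toSet ∩ shade u ((d0.reflect k).toSet)).Nonempty
      ↔ (d1.toSet ∩ shade (rmap k u) d0.toSet).Nonempty := by
    rw [toSet_reflect, toSet_reflect, shade_rpre, ← Set.preimage_inter]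
    constructor
    · rintro ⟨x, hx⟩
      exact ⟨rmap k x, hx⟩
    · rintro ⟨y, hy⟩
      exact ⟨rmap k y, by rwa [Set.mem_preimage, rmap_invol]⟩
  by_cases hc : (d1.toSet ∩ shade (rmap k u) d0.toSet).Nonempty
  · simp only [tau, if_pos (hcond.mpr hc), if_pos hc, hval]
    ring
  · simp only [tau, if_neg (fun h => hc (hcond.mp h)), if_neg hc, neg_zero]

lemma reflCube_invol (k : Fin 3) (q : Fin 3 → ℤ) : reflCube k (reflCube k q) = q := by
  funext i
  simp only [reflCube]
  by_cases h : i = k <;> simp [h] <;> omega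

lemma reflect_invol (k : Fin 3) (d : Domino) : (d.reflect k).reflect k = d := by
  obtain ⟨c1, c2, adj⟩ := d
  show Domino.mk (reflCube k (reflCube k c1)) (reflCube k (reflCube k c2)) _ = Domino.mk c1 c2 adj
  simp [reflCube_invol]

lemma reflect_inj (k : Fin 3) : Function.Injective (fun d : Domino => d.reflect k) := by
  intro a b h
  have h2 := congrArg (fun d : Domino => d.reflect k) h
  simp only at h2
  rwa [reflect_invol, reflect_invol] at h2

lemma T_image (k : Fin 3) (u : R3) (t : Finset Domino) :
    T u (t.image fun d => d.reflect k) = - T (rmap k u) t := by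
  unfold T
  rw [Finset.sum_image (fun x _ y _ h => reflect_inj k h)]
  calc ∑ d0 ∈ t, ∑ d1 ∈ t.image (fun d => d.reflect k), tau u (d0.reflect k) d1
      = ∑ d0 ∈ t, ∑ d1 ∈ t, tau u (d0.reflect k) (d1.reflect k) :=
        Finset.sum_congr rfl fun d0 _ =>
          Finset.sum_image (fun x _ y _ h => reflect_inj k h)
    _ = ∑ d0 ∈ t, ∑ d1 ∈ t, - tau (rmap k u) d0 d1 :=
        Finset.sum_congr rfl fun d0 _ => Finset.sum_congr rfl fun d1 _ => tau_reflect k u d0 d1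
    _ = - ∑ d0 ∈ t, ∑ d1 ∈ t, tau (rmap k u) d0 d1 := by
        simp [Finset.sum_neg_distrib]

lemma rmap_std_self (k : Fin 3) : rmap k (stdR k) = -stdR k := by
  funext j
  simp only [rmap, stdR, Pi.neg_apply]
  by_cases h : j = k
  · subst h; simp
  · simp [h]

lemma rmap_std_ne (k i : Fin 3) (h : i ≠ k) : rmap k (stdR i) = stdR i := by
  funext j
  by_cases hj : j = k
  · subst hj; simp [rmap, stdR, Ne.symm h]
  · simp [rmap, stdR, hj]

lemma rmap_neg (k : Fin 3) (x : R3) : rmap k (-x) = - rmap k x := by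
  funext j
  by_cases h : j = k <;> simp [rmap, h]

end MS
theorem statement2 (R : Finset (Fin 3 → ℤ)) (t : Finset Domino) (ht : IsTiling R t)
    (k : Fin 3) (u : R3) (hu : u ∈ PhiR) :
    T u (t.image (fun d => d.reflect k)) = - T u t := by
  obtain ⟨i, hi | hi⟩ := hu
  · subst hi
    by_cases hik : i = k
    · subst hik
      rw [MS.T_image i (stdR i) t, MS.rmap_std_self, MS.T_neg]
    · rw [MS.T_image k (stdR i) t, MS.rmap_std_ne k i hik]
  · subst hi
    by_cases hik : i = k
    · subst hik
      rw [MS.T_image i (-stdR i) t, MS.rmap_neg, MS.rmap_std_self, neg_neg, ← MS.T_neg]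
    · rw [MS.T_image k (-stdR i) t, MS.rmap_neg, MS.rmap_std_ne k i hik]
end
end

section
/- Let γ be a closed curve made of segments of a region R (each unit piece γ|[k,k+1] is a segment of R), let β ∈ B, and let u = aβ1 + bβ2 + cβ3 with ‖u‖ < 1 and abc ≠ 0. Then the images of γ and of the translate γ + u are disjoint. -/
open scoped BigOperators
noncomputable section

lemma seg_dir (s : Seg) : ∃ j : Fin 3, ∀ i, i ≠ j → s.a i = s.b i := by
  have h := s.adj
  rw [Fin.sum_univ_three] at h
  have e0 := abs_eq_zero (a := s.a 0 - s.b 0)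
  have e1 := abs_eq_zero (a := s.a 1 - s.b 1)
  have e2 := abs_eq_zero (a := s.a 2 - s.b 2)
  have n0 := abs_nonneg (s.a 0 - s.b 0)
  have n1 := abs_nonneg (s.a 1 - s.b 1)
  have n2 := abs_nonneg (s.a 2 - s.b 2)
  have key : (s.a 0 = s.b 0 ∧ s.a 1 = s.b 1) ∨ (s.a 0 = s.b 0 ∧ s.a 2 = s.b 2)
      ∨ (s.a 1 = s.b 1 ∧ s.a 2 = s.b 2) := by
    have h0 : s.a 0 - s.b 0 = 0 ∨ 1 ≤ |s.a 0 - s.b 0| := by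
      rcases eq_or_ne (s.a 0 - s.b 0) 0 with h' | h'
      · exact Or.inl h'
      · exact Or.inr (Int.one_le_abs (by omega))
    have h1 : s.a 1 - s.b 1 = 0 ∨ 1 ≤ |s.a 1 - s.b 1| := by
      rcases eq_or_ne (s.a 1 - s.b 1) 0 with h' | h'
      · exact Or.inl h'
      · exact Or.inr (Int.one_le_abs (by omega))
    have h2 : s.a 2 - s.b 2 = 0 ∨ 1 ≤ |s.a 2 - s.b 2| := by
      rcases eq_or_ne (s.a 2 - s.b 2) 0 with h' | h'
      · exact Or.inl h'
      · exact Or.inr (Int.one_le_abs (by omega))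
    omega
  rcases key with ⟨p, q⟩ | ⟨p, q⟩ | ⟨p, q⟩
  · exact ⟨2, by intro i hi; fin_cases i <;> simp_all⟩
  · exact ⟨1, by intro i hi; fin_cases i <;> simp_all⟩
  · exact ⟨0, by intro i hi; fin_cases i <;> simp_all⟩

lemma det3_dep12 (x z : R3) (t : ℝ) : det3 x (t • x) z = 0 := by
  simp only [det3, Matrix.det_fin_three, Matrix.of_apply, Matrix.cons_val', Matrix.cons_val_zero,
    Matrix.cons_val_one, Matrix.head_cons, Matrix.empty_val', Matrix.cons_val_fin_one,
    Matrix.head_fin_const, Matrix.cons_val_two, Matrix.tail_cons, Pi.smul_apply, smul_eq_mul]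
  ring

lemma det3_dep13 (x z : R3) (t : ℝ) : det3 x z (t • x) = 0 := by
  simp only [det3, Matrix.det_fin_three, Matrix.of_apply, Matrix.cons_val', Matrix.cons_val_zero,
    Matrix.cons_val_one, Matrix.head_cons, Matrix.empty_val', Matrix.cons_val_fin_one,
    Matrix.head_fin_const, Matrix.cons_val_two, Matrix.tail_cons, Pi.smul_apply, smul_eq_mul]
  ring

lemma det3_dep23 (x z : R3) (t : ℝ) : det3 z x (t • x) = 0 := by
  simp only [det3, Matrix.det_fin_three, Matrix.of_apply, Matrix.cons_val', Matrix.cons_val_zero,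
    Matrix.cons_val_one, Matrix.head_cons, Matrix.empty_val', Matrix.cons_val_fin_one,
    Matrix.head_fin_const, Matrix.cons_val_two, Matrix.tail_cons, Pi.smul_apply, smul_eq_mul]
  ring

lemma phi_pair_dep (i : Fin 3) (x y : R3) (hx : x = stdR i ∨ x = -stdR i)
    (hy : y = stdR i ∨ y = -stdR i) : ∃ t : ℝ, y = t • x := by
  rcases hx with rfl | rfl <;> rcases hy with rfl | rfl
  · exact ⟨1, (one_smul _ _).symm⟩
  · exact ⟨-1, by simp⟩
  · exact ⟨-1, by simp⟩
  · exact ⟨1, (one_smul _ _).symm⟩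

lemma coord_ne (b1 b2 b3 : R3) (hβ : IsLatticeBasis b1 b2 b3)
    (a b c : ℝ) (habc : a * b * c ≠ 0) (i : Fin 3) :
    (a • b1 + b • b2 + c • b3) i ≠ 0 := by
  obtain ⟨⟨i1, h1⟩, ⟨i2, h2⟩, ⟨i3, h3⟩, hdet⟩ := hβ
  have ha : a ≠ 0 := fun h => habc (by rw [h]; ring)
  have hb : b ≠ 0 := fun h => habc (by rw [h]; ring)
  have hc : c ≠ 0 := fun h => habc (by rw [h]; ring)
  have hdist12 : i1 ≠ i2 := by
    rintro rfl
    obtain ⟨t, rfl⟩ := phi_pair_dep i1 b1 b2 h1 h2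
    rw [det3_dep12] at hdet; exact one_ne_zero hdet.symm
  have hdist13 : i1 ≠ i3 := by
    rintro rfl
    obtain ⟨t, rfl⟩ := phi_pair_dep i1 b1 b3 h1 h3
    rw [det3_dep13] at hdet; exact one_ne_zero hdet.symm
  have hdist23 : i2 ≠ i3 := by
    rintro rfl
    obtain ⟨t, rfl⟩ := phi_pair_dep i2 b2 b3 h2 h3
    rw [det3_dep23] at hdet; exact one_ne_zero hdet.symm
  have hi : i = i1 ∨ i = i2 ∨ i = i3 := by
    have l0 := i.isLt; have l1 := i1.isLt; have l2 := i2.isLt; have l3 := i3.isLt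
    rw [Fin.ext_iff, Fin.ext_iff, Fin.ext_iff]
    rw [Ne, Fin.ext_iff] at hdist12 hdist13 hdist23
    omega
  have hd21 := hdist12.symm; have hd31 := hdist13.symm; have hd32 := hdist23.symm
  rcases hi with rfl | rfl | rfl <;>
    rcases h1 with rfl | rfl <;> rcases h2 with rfl | rfl <;> rcases h3 with rfl | rfl <;>
    simp_all [stdR, Pi.add_apply, Pi.smul_apply, Pi.neg_apply, smul_eq_mul]

theorem statement9 (R : Finset (Fin 3 → ℤ)) (n : ℕ) (γ : Fin n → Seg)
    (hseg : ∀ k, (γ k).inRegion R)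
    (hclosed : IsClosedCurve (fun k => (γ k).toR))
    (b1 b2 b3 : R3) (hβ : IsLatticeBasis b1 b2 b3)
    (a b c : ℝ) (habc : a * b * c ≠ 0)
    (hu : Real.sqrt (dot (a • b1 + b • b2 + c • b3) (a • b1 + b • b2 + c • b3)) < 1) :
    ∀ k l : Fin n, ∀ x ∈ Set.Icc (0:ℝ) 1, ∀ y ∈ Set.Icc (0:ℝ) 1,
      (γ k).pt x ≠ (γ l).pt y + (a • b1 + b • b2 + c • b3) := by
  intro k l x hx y hy heq
  set u : R3 := a • b1 + b • b2 + c • b3 with hu_def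
  obtain ⟨jk, hjk⟩ := seg_dir (γ k)
  obtain ⟨jl, hjl⟩ := seg_dir (γ l)
  have hex : ∀ j j' : Fin 3, ∃ i : Fin 3, i ≠ j ∧ i ≠ j' := by decide
  obtain ⟨i, hik, hil⟩ := hex jk jl
  have hk := hjk i hik
  have hl := hjl i hil
  have heqi := congrFun heq i
  simp only [Seg.pt, cubeCenter, Pi.add_apply] at heqi
  rw [hk, hl] at heqi
  have hui : u i = ((γ k).b i : ℝ) - ((γ l).b i : ℝ) := by
    push_cast at heqi ⊢
    linarith
  -- u i is a nonzero integer, but |u i| < 1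
  have hne : u i ≠ 0 := coord_ne b1 b2 b3 hβ a b c habc i
  have hdot_nonneg : 0 ≤ dot u u :=
    Finset.sum_nonneg fun j _ => mul_self_nonneg (u j)
  have hdot_lt : dot u u < 1 := by
    nlinarith [Real.sq_sqrt hdot_nonneg, Real.sqrt_nonneg (dot u u)]
  have hsq : u i * u i ≤ dot u u :=
    Finset.single_le_sum (f := fun j => u j * u j)
      (fun j _ => mul_self_nonneg (u j)) (Finset.mem_univ i)
  set m : ℤ := (γ k).b i - (γ l).b i with hm
  have hmi : u i = (m : ℝ) := by rw [hui, hm]; exact (Int.cast_sub _ _).symm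
  have hmne : m ≠ 0 := by
    intro h; apply hne; rw [hmi, h]; simp
  have : (1 : ℝ) ≤ (m : ℝ) * (m : ℝ) := by
    have h1 : 1 ≤ m * m := by
      rcases hmne.lt_or_gt with h | h <;> nlinarith
    exact_mod_cast h1
  rw [hmi] at hsq
  linarith
end
end

section
/- Let G be a connected bipartite graph with 2n vertices, n black and n white (n ≥ 1). Then the graph G × I_{2n−1}, the 'prism' of G over the path with 2n−1 vertices, has a perfect matching. -/
open scoped BigOperators
noncomputable section

namespace Aux

variable {W : Type*}

lemma interior_two_nbrs {G : SimpleGraph W} {u v : W} (p : G.Walk u v) (hp : p.IsPath)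
    (x : W) (hx : x ∈ p.support) (hxu : x ≠ u) (hxv : x ≠ v) :
    ∃ a b, a ≠ b ∧ G.Adj x a ∧ G.Adj x b := by
  induction p with
  | nil => simp at hx; exact absurd hx hxu
  | @cons u' v' w' h q ih =>
    rw [SimpleGraph.Walk.cons_isPath_iff] at hp
    rw [SimpleGraph.Walk.support_cons] at hx
    rcases List.mem_cons.mp hx with rfl | hxq
    · exact absurd rfl hxu
    · by_cases hxv' : x = v'
      · subst hxv'
        cases q with
        | nil => exact absurd rfl hxv
        | @cons _ b _ h2 q2 =>
          refine ⟨u', b, ?_, h.symm, h2⟩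
          intro hub
          apply hp.2
          rw [hub, SimpleGraph.Walk.support_cons]
          exact List.mem_cons_of_mem _ q2.start_mem_support
      · exact ih hp.1 hxq hxv' hxv

lemma reachable_induce_of_support {G : SimpleGraph W} {s : Set W} {u v : W}
    (p : G.Walk u v) (hs : ∀ y ∈ p.support, y ∈ s) (hu : u ∈ s) (hv : v ∈ s) :
    (G.induce s).Reachable ⟨u, hu⟩ ⟨v, hv⟩ := by
  induction p with
  | nil => exact SimpleGraph.Reachable.refl _
  | @cons a b c h q ih =>
    have hb : b ∈ s := hs b (by simp [SimpleGraph.Walk.support_cons, q.start_mem_support])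
    have h1 : (G.induce s).Adj ⟨a, hu⟩ ⟨b, hb⟩ := h
    exact h1.reachable.trans (ih (fun y hy => hs y (by simp [SimpleGraph.Walk.support_cons, hy])) hb hv)

lemma walk_even_iff {G : SimpleGraph W} {c : W → Bool}
    (hc : ∀ a b, G.Adj a b → c a ≠ c b) {u v : W} (p : G.Walk u v) :
    Even p.length ↔ c u = c v := by
  induction p with
  | nil => simp
  | @cons a b c' h q ih =>
    have hab := hc a b h
    rw [SimpleGraph.Walk.length_cons]
    rw [Nat.even_add_one]
    rw [ih]
    cases hA : c a <;> cases hB : c b <;> cases hC : c c' <;> simp_all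

lemma matching_of_involution {G : SimpleGraph W} (f : W → W)
    (hinv : ∀ x, f (f x) = x) (hadj : ∀ x, G.Adj x (f x)) :
    ∃ M : G.Subgraph, M.IsPerfectMatching := by
  refine ⟨⟨Set.univ, fun a b => f a = b ∨ f b = a, ?_, fun _ => trivial, ?_⟩, ?_, fun v => trivial⟩
  · rintro a b (rfl | rfl)
    · exact hadj a
    · exact (hadj b).symm
  · constructor; rintro a b (rfl | rfl)
    · exact Or.inr rfl
    · exact Or.inl rfl
  · rintro v -
    refine ⟨f v, Or.inl rfl, ?_⟩
    rintro y (rfl | rfl)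
    · rfl
    · exact (hinv y).symm

end Aux

namespace Aux2
open Finset SimpleGraph

variable {W : Type*} [Fintype W] [DecidableEq W]

lemma bipartite_degree_sum (G : SimpleGraph W) [DecidableRel G.Adj]
    (c : W → Bool) (hc : ∀ a b, G.Adj a b → c a ≠ c b) (m : Bool) :
    ∑ v ∈ univ.filter (fun v => c v = m), G.degree v = G.edgeFinset.card := by
  have h1 : (univ.filter fun d : G.Dart => c d.fst = m).card
      = ∑ v ∈ univ.filter (fun v => c v = m), G.degree v := by
    rw [Finset.card_eq_sum_card_fiberwise (f := fun (d : G.Dart) => d.fst)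
      (t := univ.filter (fun v => c v = m)) (fun d hd => by
        simp only [Finset.mem_coe, mem_filter, mem_univ, true_and] at hd ⊢; exact hd)]
    refine Finset.sum_congr rfl fun v hv => ?_
    simp only [mem_filter, mem_univ, true_and] at hv
    rw [← SimpleGraph.dart_fst_fiber_card_eq_degree]
    congr 1
    ext d
    simp only [mem_filter, mem_univ, true_and]
    constructor
    · rintro ⟨-, h⟩; exact h
    · intro h; exact ⟨h ▸ hv, h⟩
  rw [← h1]
  apply Finset.card_bij (fun (d : G.Dart) _ => d.edge)
  · intro d _
    rw [mem_edgeFinset]; exact d.edge_mem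
  · intro d1 h1' d2 h2' he
    simp only [mem_filter, mem_univ, true_and] at h1' h2'
    rcases (SimpleGraph.dart_edge_eq_iff d1 d2).mp he with rfl | rfl
    · rfl
    · exfalso
      have h3 := hc d2.fst d2.snd d2.adj
      have h1'' : c d2.snd = m := h1'
      exact h3 (h2'.trans h1''.symm)
  · intro e he
    rw [mem_edgeFinset] at he
    induction e with
    | _ a b =>
      have hab : G.Adj a b := he
      by_cases hca : c a = m
      · exact ⟨⟨(a, b), hab⟩, by simpa using hca, rfl⟩
      · have hcb : c b = m := by
          have := hc a b hab
          cases hA : c a <;> cases hB : c b <;> cases m <;> simp_all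
        exact ⟨⟨(b, a), hab.symm⟩, by simpa using hcb, Sym2.eq_swap⟩

lemma tree_leaf_of_majority (G : SimpleGraph W) (hG : G.IsTree)
    (c : W → Bool) (m : Bool)
    (hcol : (∀ a b, G.Adj a b → c a ≠ c b) ∨ (∀ v, c v = m))
    (hmaj : (univ.filter fun v => c v ≠ m).card < (univ.filter fun v => c v = m).card) :
    ∃ x, c x = m ∧ ∀ a b, G.Adj x a → G.Adj x b → a = b := by
  letI : DecidableRel G.Adj := Classical.decRel G.Adj
  simp only [ne_eq] at hmaj
  set S := univ.filter fun v : W => c v = m with hS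
  have hk : 1 ≤ S.card := Nat.succ_le_of_lt (Nat.lt_of_le_of_lt (Nat.zero_le _) hmaj)
  have hsplit : S.card + (univ.filter fun v : W => ¬(c v = m)).card = Fintype.card W :=
    Finset.card_filter_add_card_filter_not _
  have hedge : G.edgeFinset.card + 1 = Fintype.card W := hG.card_edgeFinset
  have hsum : ∑ v ∈ S, G.degree v ≤ 2 * S.card - 2 := by
    rcases hcol with hprop | hconst
    · rw [bipartite_degree_sum G c hprop m]
      omega
    · have hall : S = univ := by
        ext v; simp [hS, hconst v]
      have h2 : ∑ v ∈ S, G.degree v = 2 * G.edgeFinset.card := by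
        rw [hall]; exact G.sum_degrees_eq_twice_card_edges
      have hcw : S.card = Fintype.card W := by rw [hall]; exact Finset.card_univ
      omega
  by_contra hno
  push_neg at hno
  have hge : ∀ v ∈ S, 2 ≤ G.degree v := by
    intro v hv
    simp only [hS, mem_filter, mem_univ, true_and] at hv
    obtain ⟨a, b, hadj1, hadj2, hne⟩ := hno v hv
    rw [← SimpleGraph.card_neighborFinset_eq_degree]
    apply Finset.one_lt_card.mpr
    exact ⟨a, by simpa using hadj1, b, by simpa using hadj2, hne⟩
  have hb := Finset.card_nsmul_le_sum S (fun v => G.degree v) 2 hge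
  simp only [smul_eq_mul] at hb
  omega

end Aux2

namespace Aux3
open Finset SimpleGraph

variable {W : Type*}

lemma lemmaD {G : SimpleGraph W} (hc : G.Connected) (x : W)
    (hx : ∀ a b, G.Adj x a → G.Adj x b → a = b) (hy : ∃ y : W, y ≠ x) :
    (G.induce {y | y ≠ x}).Connected := by
  classical
  obtain ⟨y0, hy0⟩ := hy
  rw [SimpleGraph.connected_iff]
  constructor
  · rintro ⟨a, ha⟩ ⟨b, hb⟩
    obtain ⟨p⟩ := hc.preconnected a b
    have hnx : ∀ z ∈ (p.toPath : G.Walk a b).support, z ∈ {y | y ≠ x} := by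
      intro z hz
      simp only [Set.mem_setOf_eq]
      rintro rfl
      obtain ⟨a', b', hne, h1, h2⟩ := Aux.interior_two_nbrs _ p.toPath.2 z hz
        (fun h => ha h.symm) (fun h => hb h.symm)
      exact hne (hx a' b' h1 h2)
    exact Aux.reachable_induce_of_support _ hnx ha hb
  · exact ⟨⟨y0, hy0⟩⟩

lemma connected_delete_nonbridge {G : SimpleGraph W} (hc : G.Connected) {u v : W}
    (h : G.Adj u v) (hnb : ¬ G.IsBridge s(u, v)) :
    (G \ SimpleGraph.fromEdgeSet {s(u, v)}).Connected := by
  have hr : (G \ SimpleGraph.fromEdgeSet {s(u, v)}).Reachable u v := by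
    by_contra hre; exact hnb hre
  rw [SimpleGraph.connected_iff]
  refine ⟨fun a b => ?_, hc.nonempty⟩
  obtain ⟨p⟩ := hc.preconnected a b
  induction p with
  | nil => exact SimpleGraph.Reachable.refl _
  | @cons a' m' b' hadj q ih =>
    refine SimpleGraph.Reachable.trans ?_ ih
    by_cases he : s(a', m') = s(u, v)
    · rw [Sym2.eq_iff] at he
      rcases he with ⟨rfl, rfl⟩ | ⟨rfl, rfl⟩
      · exact hr
      · exact hr.symm
    · refine SimpleGraph.Adj.reachable ?_
      rw [SimpleGraph.sdiff_adj]
      refine ⟨hadj, ?_⟩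
      rw [SimpleGraph.fromEdgeSet_adj]
      rintro ⟨hmem, -⟩
      exact he (Set.mem_singleton_iff.mp hmem)

lemma transfer {V : Type*} (G : SimpleGraph V) (s : Set V) (x : ↥s)
    (h : ((G.induce s).induce {y : ↥s | y ≠ x}).Connected) :
    (G.induce (s \ {x.val})).Connected := by
  let φ : ((G.induce s).induce {y : ↥s | y ≠ x}) →g (G.induce (s \ {x.val})) :=
    ⟨fun z => ⟨z.val.val, z.val.2, fun hh => z.2 (Subtype.ext hh)⟩, fun {a b} hab => hab⟩
  rw [SimpleGraph.connected_iff] at h ⊢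
  obtain ⟨hp, hne⟩ := h
  constructor
  · rintro ⟨a, ha, hax⟩ ⟨b, hb, hbx⟩
    have h1 := hp ⟨⟨a, ha⟩, fun hh => hax (congrArg Subtype.val hh)⟩
      ⟨⟨b, hb⟩, fun hh => hbx (congrArg Subtype.val hh)⟩
    exact h1.map φ
  · obtain ⟨z⟩ := hne
    exact ⟨φ z⟩

lemma card_filter_subtype {V : Type*} [Fintype V] [DecidableEq V] (s : Set V)
    [DecidablePred (· ∈ s)] (q : V → Prop) [DecidablePred q] :
    (univ.filter fun y : ↥s => q y.val).card = (univ.filter fun v => v ∈ s ∧ q v).card := by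
  apply Finset.card_bij (fun (y : ↥s) _ => y.val)
  · intro y hy; simp only [mem_filter, mem_univ, true_and] at hy ⊢; exact ⟨y.2, hy⟩
  · intro y1 _ y2 _ hh; exact Subtype.ext hh
  · intro v hv
    simp only [mem_filter, mem_univ, true_and] at hv
    exact ⟨⟨v, hv.1⟩, by simp only [mem_filter, mem_univ, true_and]; exact hv.2, rfl⟩

variable [Fintype W] [DecidableEq W]

lemma inner_tree (H : SimpleGraph W) (hc : H.Connected) (hacyc : H.IsAcyclic)
    (c : W → Bool) (m : Bool)
    (hcol : (∀ a b, H.Adj a b → c a ≠ c b) ∨ (∀ v, c v = m))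
    (hmaj : (univ.filter fun v => c v ≠ m).card < (univ.filter fun v => c v = m).card)
    (hcard : 2 ≤ Fintype.card W) :
    ∃ x, c x = m ∧ (H.induce {y | y ≠ x}).Connected := by
  obtain ⟨x, hxm, hxnb⟩ := Aux2.tree_leaf_of_majority H ⟨hc, hacyc⟩ c m hcol hmaj
  exact ⟨x, hxm, lemmaD hc x hxnb (Fintype.exists_ne_of_one_lt_card hcard x)⟩

lemma inner : ∀ (E : ℕ) (H : SimpleGraph W), H.edgeSet.ncard ≤ E → H.Connected →
    ∀ (c : W → Bool) (m : Bool),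
    ((∀ a b, H.Adj a b → c a ≠ c b) ∨ (∀ v, c v = m)) →
    (univ.filter fun v => c v ≠ m).card < (univ.filter fun v => c v = m).card →
    2 ≤ Fintype.card W →
    ∃ x, c x = m ∧ (H.induce {y | y ≠ x}).Connected := by
  intro E
  induction E with
  | zero =>
    intro H hE hc c m hcol hmaj hcard
    have hempty : H.edgeSet = ∅ := by
      have : H.edgeSet.ncard = 0 := Nat.le_zero.mp hE
      exact Set.ncard_eq_zero (Set.toFinite _) |>.mp this
    refine inner_tree H hc (SimpleGraph.isAcyclic_iff_forall_edge_isBridge.mpr ?_) c m hcol hmaj hcard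
    intro e he
    exfalso
    rw [hempty] at he
    exact he
  | succ E ih =>
    intro H hE hc c m hcol hmaj hcard
    by_cases hbr : ∃ e ∈ H.edgeSet, ¬ H.IsBridge e
    · obtain ⟨e, he, hnb⟩ := hbr
      induction e with
      | _ u v =>
        have hadj : H.Adj u v := he
        have hconn' := connected_delete_nonbridge hc hadj hnb
        have hss : (H \ SimpleGraph.fromEdgeSet {s(u, v)}).edgeSet ⊂ H.edgeSet := by
          have heq : (H \ SimpleGraph.fromEdgeSet {s(u, v)}).edgeSet = H.edgeSet \ {s(u, v)} := by
            simp [SimpleGraph.edgeSet_sdiff, SimpleGraph.edgeSet_fromEdgeSet,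
              SimpleGraph.edgeSet_sdiff_sdiff_isDiag]
          rw [heq]
          exact Set.sdiff_singleton_ssubset.mpr he
        have hE' : (H \ SimpleGraph.fromEdgeSet {s(u, v)}).edgeSet.ncard ≤ E := by
          have := Set.ncard_lt_ncard hss (Set.toFinite _)
          omega
        have hcol' : (∀ a b, (H \ SimpleGraph.fromEdgeSet {s(u, v)}).Adj a b → c a ≠ c b)
            ∨ (∀ v, c v = m) := by
          rcases hcol with hl | hr
          · exact Or.inl fun a b hab => hl a b hab.1
          · exact Or.inr hr
        obtain ⟨x, hxm, hxc⟩ := ih _ hE' hconn' c m hcol' hmaj hcard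
        refine ⟨x, hxm, hxc.mono ?_⟩
        intro a b hab
        exact hab.1
    · push_neg at hbr
      refine inner_tree H hc ?_ c m hcol hmaj hcard
      exact SimpleGraph.isAcyclic_iff_forall_edge_isBridge.mpr hbr

end Aux3

namespace Aux4
open Finset SimpleGraph

lemma exists_noncut {V : Type*} [Fintype V] [DecidableEq V] (G : SimpleGraph V)
    (s : Set V) [DecidablePred (· ∈ s)]
    (hconn : (G.induce s).Connected) (c : V → Bool) (m : Bool)
    (hcol : (∀ u v, G.Adj u v → c u ≠ c v) ∨ (∀ v, c v = m))
    (hmaj : (univ.filter fun v => v ∈ s ∧ c v ≠ m).card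
      < (univ.filter fun v => v ∈ s ∧ c v = m).card)
    (hcard2 : 2 ≤ (univ.filter (· ∈ s)).card) :
    ∃ x, ∃ _ : x ∈ s, c x = m ∧ (G.induce (s \ {x})).Connected := by
  have e1 : (univ.filter fun y : ↥s => c y.val = m).card
      = (univ.filter fun v => v ∈ s ∧ c v = m).card :=
    Aux3.card_filter_subtype s (fun v => c v = m)
  have e2 : (univ.filter fun y : ↥s => c y.val ≠ m).card
      = (univ.filter fun v => v ∈ s ∧ c v ≠ m).card :=
    Aux3.card_filter_subtype s (fun v => c v ≠ m)
  have hcardW : 2 ≤ Fintype.card ↥s := by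
    rw [Fintype.card_subtype]; exact hcard2
  have hcol' : (∀ a b : ↥s, (G.induce s).Adj a b → c a.val ≠ c b.val)
      ∨ (∀ y : ↥s, c y.val = m) := by
    rcases hcol with hl | hr
    · exact Or.inl fun a b hab => hl a.val b.val hab
    · exact Or.inr fun y => hr y.val
  obtain ⟨x, hxm, hxc⟩ := Aux3.inner (G.induce s).edgeSet.ncard (G.induce s) le_rfl hconn
    (fun y => c y.val) m hcol' (by rw [e1, e2]; exact hmaj) hcardW
  exact ⟨x.val, x.2, hxm, Aux3.transfer G s x hxc⟩

end Aux4

namespace Aux5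
set_option linter.unusedSectionVars false
open Finset

variable {V : Type*} [DecidableEq V]

lemma getD_mem {L : List V} {i : ℕ} (h : i < L.length) (d : V) : L.getD i d ∈ L := by
  rw [List.getD_eq_getElem L d h]
  exact List.getElem_mem h

lemma getD_indexOf {L : List V} {v : V} (h : v ∈ L) (d : V) : L.getD (L.idxOf v) d = v := by
  rw [List.getD_eq_getElem L d (List.idxOf_lt_length_iff.mpr h)]
  exact List.getElem_idxOf _

lemma indexOf_getD {L : List V} (hnd : L.Nodup) {i : ℕ} (h : i < L.length) (d : V) :
    L.idxOf (L.getD i d) = i := by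
  have hm : L.getD i d ∈ L := getD_mem h d
  have h1 : L[L.idxOf (L.getD i d)]'(List.idxOf_lt_length_iff.mpr hm) = L.getD i d :=
    List.getElem_idxOf _
  have h2 : L[List.idxOf (L.getD i d) L]'(List.idxOf_lt_length_iff.mpr hm) = L[i]'h :=
    h1.trans (List.getD_eq_getElem L d h)
  exact (List.Nodup.getElem_inj_iff hnd).mp h2

lemma getD_inj {L : List V} (hnd : L.Nodup) {i j : ℕ} (hi : i < L.length) (hj : j < L.length)
    (d : V) (h : L.getD i d = L.getD j d) : i = j := by
  have := indexOf_getD hnd hi d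
  rw [h, indexOf_getD hnd hj d] at this
  omega

lemma chain'_getD {R : V → V → Prop} {L : List V} (hc : List.IsChain R L) {i : ℕ}
    (h : i + 1 < L.length) (d : V) : R (L.getD i d) (L.getD (i+1) d) := by
  rw [List.getD_eq_getElem L d (by omega), List.getD_eq_getElem L d h]
  exact List.isChain_iff_getElem.mp hc i (by omega)

end Aux5


namespace Step
set_option linter.unusedSectionVars false
open Aux5

variable {V : Type*} [DecidableEq V]

def S2 (w b : V) : Set V := {v | v ≠ w ∧ v ≠ b}

def fp (i : ℕ) : ℕ := if i % 2 = 0 then i + 1 else i - 1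
def ip (i : ℕ) : ℕ := if i % 2 = 0 then i - 1 else i + 1

lemma fp_lt' {len i : ℕ} (he : len % 2 = 0) (h : i < len) : fp i < len := by
  unfold fp; split <;> omega

lemma fp_fp' {i : ℕ} : fp (fp i) = i := by
  unfold fp
  split <;> rename_i h
  · rw [if_neg (by omega)]; omega
  · rw [if_pos (by omega)]; omega

lemma ip_ip' {i : ℕ} (h : 1 ≤ i) : ip (ip i) = i := by
  unfold ip
  split <;> rename_i h2
  · rw [if_neg (by omega)]; omega
  · rw [if_pos (by omega)]; omega

lemma ip_interior' {len i : ℕ} (he : len % 2 = 0) (h1 : 1 ≤ i) (h2 : i ≤ len - 2) :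
    1 ≤ ip i ∧ ip i ≤ len - 2 := by
  unfold ip; split <;> omega

def stepFun (w b : V) (L : List V) (n : ℕ)
    (f' : ↥(S2 w b) × Fin (2*n-1) → ↥(S2 w b) × Fin (2*n-1)) :
    V × Fin (2*n+1) → V × Fin (2*n+1) := fun x =>
  if hvw : x.1 = w ∨ x.1 = b then
    if hj2 : x.2.val = 2*n then
      (L.getD (fp (L.idxOf x.1)) w, ⟨2*n, by omega⟩)
    else
      (x.1, ⟨if x.2.val % 2 = 0 then x.2.val + 1 else x.2.val - 1,
        by have := x.2.isLt; split <;> omega⟩)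
  else
    if hj : x.2.val < 2*n-1 then
      ((f' (⟨x.1, ⟨fun h => hvw (Or.inl h), fun h => hvw (Or.inr h)⟩⟩, ⟨x.2.val, hj⟩)).1.val,
       ⟨(f' (⟨x.1, ⟨fun h => hvw (Or.inl h), fun h => hvw (Or.inr h)⟩⟩, ⟨x.2.val, hj⟩)).2.val,
        by have := (f' (⟨x.1, ⟨fun h => hvw (Or.inl h), fun h => hvw (Or.inr h)⟩⟩,
            ⟨x.2.val, hj⟩)).2.isLt; omega⟩)
    else
      if x.1 ∈ L then
        if x.2.val = 2*n then (L.getD (fp (L.idxOf x.1)) w, x.2)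
        else (L.getD (ip (L.idxOf x.1)) w, x.2)
      else
        (x.1, ⟨if x.2.val = 2*n then 2*n-1 else 2*n, by split <;> omega⟩)

section Main

variable {G : SimpleGraph V} {w b : V} {n : ℕ} {L : List V}
  {f' : ↥(S2 w b) × Fin (2*n-1) → ↥(S2 w b) × Fin (2*n-1)}
  (hn : 1 ≤ n) (hwb : w ≠ b) (hnd : L.Nodup)
  (hlen2 : 2 ≤ L.length) (hleneven : L.length % 2 = 0)
  (hL0 : L.getD 0 w = w) (hLlast : L.getD (L.length - 1) w = b)
  (hadjL : ∀ i, i + 1 < L.length → G.Adj (L.getD i w) (L.getD (i+1) w))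

include hnd hlen2 hleneven hL0 hLlast

lemma hwL : w ∈ L := hL0 ▸ getD_mem (by omega) w

lemma hbL : b ∈ L := hLlast ▸ getD_mem (by omega) w

lemma hidxw : L.idxOf w = 0 := by
  conv_lhs => rw [← hL0]
  exact indexOf_getD hnd (by omega) w

lemma hidxb : L.idxOf b = L.length - 1 := by
  conv_lhs => rw [← hLlast]
  exact indexOf_getD hnd (by omega) w

lemma interior_idx {v : V} (hv : v ∈ L) (hvw : v ≠ w) (hvb : v ≠ b) :
    1 ≤ L.idxOf v ∧ L.idxOf v ≤ L.length - 2 := by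
  have hlt : L.idxOf v < L.length := List.idxOf_lt_length_iff.mpr hv
  have h0 : L.idxOf v ≠ 0 := by
    intro h
    exact hvw (by rw [← getD_indexOf hv w, h, hL0])
  have h1 : L.idxOf v ≠ L.length - 1 := by
    intro h
    exact hvb (by rw [← getD_indexOf hv w, h, hLlast])
  omega

lemma interior_getD {i : ℕ} (h1 : 1 ≤ i) (h2 : i ≤ L.length - 2) :
    L.getD i w ≠ w ∧ L.getD i w ≠ b := by
  constructor
  · intro h
    have h' : L.getD i w = L.getD 0 w := by rw [hL0]; exact h
    have := getD_inj hnd (by omega : i < L.length) (by omega : 0 < L.length) w h'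
    omega
  · intro h
    have h' : L.getD i w = L.getD (L.length - 1) w := by rw [hLlast]; exact h
    have := getD_inj hnd (by omega : i < L.length) (by omega : L.length - 1 < L.length) w h'
    omega

lemma fp_lt {i : ℕ} (h : i < L.length) : fp i < L.length := by
  unfold fp; split <;> omega

lemma fp_fp {i : ℕ} : fp (fp i) = i := by
  unfold fp
  split <;> rename_i h
  · rw [if_neg (by omega)]; omega
  · rw [if_pos (by omega)]; omega

lemma ip_ip {i : ℕ} (h : 1 ≤ i) : ip (ip i) = i := by
  unfold ip
  split <;> rename_i h2
  · rw [if_neg (by omega)]; omega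
  · rw [if_pos (by omega)]; omega

lemma ip_interior {i : ℕ} (h1 : 1 ≤ i) (h2 : i ≤ L.length - 2) :
    1 ≤ ip i ∧ ip i ≤ L.length - 2 := by
  unfold ip; split <;> omega

include hadjL

lemma adj_fp {i : ℕ} (h : i < L.length) : G.Adj (L.getD i w) (L.getD (fp i) w) := by
  unfold fp
  split <;> rename_i hpar
  · exact hadjL i (by omega)
  · have h2 := hadjL (i-1) (by omega)
    rw [show i - 1 + 1 = i by omega] at h2
    exact h2.symm

lemma adj_ip {i : ℕ} (h1 : 1 ≤ i) (h2 : i ≤ L.length - 2) :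
    G.Adj (L.getD i w) (L.getD (ip i) w) := by
  unfold ip
  split <;> rename_i hpar
  · have h3 := hadjL (i-1) (by omega)
    rw [show i - 1 + 1 = i by omega] at h3
    exact h3.symm
  · exact hadjL i (by omega)

end Main
end Step

namespace Step
section Main2
open Aux5
set_option linter.unusedSectionVars false

variable {V : Type*} [DecidableEq V] {G : SimpleGraph V} {w b : V} {n : ℕ} {L : List V}
  {f' : ↥(S2 w b) × Fin (2*n-1) → ↥(S2 w b) × Fin (2*n-1)}
  (hn : 1 ≤ n) (hwb : w ≠ b) (hnd : L.Nodup)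
  (hlen2 : 2 ≤ L.length) (hleneven : L.length % 2 = 0)
  (hL0 : L.getD 0 w = w) (hLlast : L.getD (L.length - 1) w = b)
  (hadjL : ∀ i, i + 1 < L.length → G.Adj (L.getD i w) (L.getD (i+1) w))
  (hf'inv : ∀ y, f' (f' y) = y)
  (hf'adj : ∀ y, (prism (G.induce (S2 w b)) (2*n-1)).Adj y (f' y))

include hn hwb hnd hlen2 hleneven hL0 hLlast hadjL hf'inv hf'adj

lemma htop (u : V) (hu : u ∈ L) (jj : Fin (2*n+1)) (hjj : jj.val = 2*n) :
    stepFun w b L n f' (u, jj) = (L.getD (fp (L.idxOf u)) w, ⟨2*n, by omega⟩) := by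
  unfold stepFun
  by_cases hwb' : u = w ∨ u = b
  · rw [dif_pos hwb', dif_pos hjj]
  · rw [dif_neg hwb', dif_neg (show ¬((u, jj).2.val < 2*n-1) from by
      show ¬(jj.val < 2*n-1); omega)]
    rw [if_pos hu, if_pos (show (u, jj).2.val = 2*n from hjj)]
    all_goals exact Prod.ext rfl (Fin.ext hjj)

lemma hvert (u : V) (hu : u = w ∨ u = b) (jj : Fin (2*n+1)) (hjj : jj.val ≠ 2*n) :
    stepFun w b L n f' (u, jj) = (u, ⟨if jj.val % 2 = 0 then jj.val + 1 else jj.val - 1,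
      by have h1 := jj.isLt; have h2 := hjj; split <;> omega⟩) := by
  unfold stepFun
  rw [dif_pos hu, dif_neg hjj]

lemma hmid (y : ↥(S2 w b) × Fin (2*n-1)) :
    stepFun w b L n f' (y.1.val, ⟨y.2.val, by have := y.2.isLt; omega⟩) =
      ((f' y).1.val, ⟨(f' y).2.val, by have := (f' y).2.isLt; omega⟩) := by
  have hy2 : y.1.val ≠ w ∧ y.1.val ≠ b := y.1.2
  unfold stepFun
  rw [dif_neg (show ¬((y.1.val, (⟨y.2.val, by have := y.2.isLt; omega⟩ : Fin (2*n+1))).1 = w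
      ∨ (y.1.val, (⟨y.2.val, by have := y.2.isLt; omega⟩ : Fin (2*n+1))).1 = b) from
      fun h => h.elim hy2.1 hy2.2)]
  rw [dif_pos (show ((y.1.val, (⟨y.2.val, by have := y.2.isLt; omega⟩ : Fin (2*n+1))).2.val < 2*n-1)
      from y.2.isLt)]

lemma hint (u : V) (hu : u ∈ L) (huw : u ≠ w) (hub : u ≠ b) (jj : Fin (2*n+1))
    (hjj : jj.val = 2*n-1) :
    stepFun w b L n f' (u, jj) = (L.getD (ip (L.idxOf u)) w, jj) := by
  unfold stepFun
  rw [dif_neg (show ¬(u = w ∨ u = b) from fun h => h.elim huw hub)]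
  rw [dif_neg (show ¬((u, jj).2.val < 2*n-1) from by show ¬(jj.val < 2*n-1); omega)]
  rw [if_pos hu, if_neg (show ¬((u, jj).2.val = 2*n) from by show ¬(jj.val = 2*n); omega)]

lemma hD (u : V) (huL : u ∉ L) (jj : Fin (2*n+1)) (hjj : ¬ jj.val < 2*n-1) :
    stepFun w b L n f' (u, jj) = (u, ⟨if jj.val = 2*n then 2*n-1 else 2*n,
      by split <;> omega⟩) := by
  have huw : u ≠ w := fun h => huL (h ▸ hwL hnd hlen2 hleneven hL0 hLlast)
  have hub : u ≠ b := fun h => huL (h ▸ hbL hnd hlen2 hleneven hL0 hLlast)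
  unfold stepFun
  rw [dif_neg (show ¬(u = w ∨ u = b) from fun h => h.elim huw hub)]
  rw [dif_neg (show ¬((u, jj).2.val < 2*n-1) from hjj)]
  rw [if_neg huL]


lemma step_adj : ∀ x, (prism G (2*n+1)).Adj x (stepFun w b L n f' x) := by
  rintro ⟨v, j⟩
  by_cases hv : v = w ∨ v = b
  · have hvL : v ∈ L := hv.elim (fun h => h ▸ hwL hnd hlen2 hleneven hL0 hLlast)
      (fun h => h ▸ hbL hnd hlen2 hleneven hL0 hLlast)
    by_cases hj2 : j.val = 2*n
    · rw [htop hn hwb hnd hlen2 hleneven hL0 hLlast hadjL hf'inv hf'adj v hvL j hj2]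
      right
      constructor
      · have h1 := adj_fp hnd hlen2 hleneven hL0 hLlast hadjL
          (List.idxOf_lt_length_iff.mpr hvL)
        rwa [getD_indexOf hvL w] at h1
      · exact Fin.ext hj2
    · rw [hvert hn hwb hnd hlen2 hleneven hL0 hLlast hadjL hf'inv hf'adj v hv j hj2]
      left
      refine ⟨rfl, ?_⟩
      show j.val + 1 = (if j.val % 2 = 0 then j.val + 1 else j.val - 1) ∨
        (if j.val % 2 = 0 then j.val + 1 else j.val - 1) + 1 = j.val
      split <;> omega
  · by_cases hj : j.val < 2*n-1
    · have hvS : v ∈ S2 w b := ⟨fun h => hv (Or.inl h), fun h => hv (Or.inr h)⟩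
      set X : ↥(S2 w b) × Fin (2*n-1) := (⟨v, hvS⟩, ⟨j.val, hj⟩) with hX
      have h1 : stepFun w b L n f' (v, j) =
          ((f' X).1.val, ⟨(f' X).2.val, by have := (f' X).2.isLt; omega⟩) :=
        hmid hn hwb hnd hlen2 hleneven hL0 hLlast hadjL hf'inv hf'adj X
      rw [h1]
      rcases hf'adj X with ⟨h2, h3⟩ | ⟨h2, h3⟩
      · left
        exact ⟨congrArg Subtype.val h2, h3⟩
      · right
        have h4 : j.val = ((f' X).2 : Fin (2*n-1)).val := congrArg Fin.val h3
        exact ⟨h2, Fin.ext h4⟩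
    · by_cases hvL : v ∈ L
      · by_cases hj2 : j.val = 2*n
        · rw [htop hn hwb hnd hlen2 hleneven hL0 hLlast hadjL hf'inv hf'adj v hvL j hj2]
          right
          constructor
          · have h1 := adj_fp hnd hlen2 hleneven hL0 hLlast hadjL
              (List.idxOf_lt_length_iff.mpr hvL)
            rwa [getD_indexOf hvL w] at h1
          · exact Fin.ext hj2
        · have hjv : j.val = 2*n-1 := by have := j.isLt; omega
          have huw : v ≠ w := fun h => hv (Or.inl h)
          have hub : v ≠ b := fun h => hv (Or.inr h)
          rw [hint hn hwb hnd hlen2 hleneven hL0 hLlast hadjL hf'inv hf'adj v hvL huw hub j hjv]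
          right
          refine ⟨?_, rfl⟩
          have hbd := interior_idx hnd hlen2 hleneven hL0 hLlast hvL huw hub
          have h1 := adj_ip hnd hlen2 hleneven hL0 hLlast hadjL hbd.1 hbd.2
          rwa [getD_indexOf hvL w] at h1
      · rw [hD hn hwb hnd hlen2 hleneven hL0 hLlast hadjL hf'inv hf'adj v hvL j hj]
        left
        refine ⟨rfl, ?_⟩
        show j.val + 1 = (if j.val = 2*n then 2*n-1 else 2*n) ∨
          (if j.val = 2*n then 2*n-1 else 2*n) + 1 = j.val
        have := j.isLt
        split <;> omega

lemma step_inv : ∀ x, stepFun w b L n f' (stepFun w b L n f' x) = x := by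
  rintro ⟨v, j⟩
  by_cases hv : v = w ∨ v = b
  · have hvL : v ∈ L := hv.elim (fun h => h ▸ hwL hnd hlen2 hleneven hL0 hLlast)
      (fun h => h ▸ hbL hnd hlen2 hleneven hL0 hLlast)
    by_cases hj2 : j.val = 2*n
    · rw [htop hn hwb hnd hlen2 hleneven hL0 hLlast hadjL hf'inv hf'adj v hvL j hj2]
      have hilt : L.idxOf v < L.length := List.idxOf_lt_length_iff.mpr hvL
      have hfplt : fp (L.idxOf v) < L.length := fp_lt' hleneven hilt
      have hu : L.getD (fp (L.idxOf v)) w ∈ L := getD_mem hfplt w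
      rw [htop hn hwb hnd hlen2 hleneven hL0 hLlast hadjL hf'inv hf'adj _ hu ⟨2*n, by omega⟩ rfl]
      rw [indexOf_getD hnd hfplt w, fp_fp', getD_indexOf hvL w]
      exact Prod.ext rfl (Fin.ext hj2.symm)
    · rw [hvert hn hwb hnd hlen2 hleneven hL0 hLlast hadjL hf'inv hf'adj v hv j hj2]
      rw [hvert hn hwb hnd hlen2 hleneven hL0 hLlast hadjL hf'inv hf'adj v hv
        ⟨if j.val % 2 = 0 then j.val + 1 else j.val - 1,
          by have h1 := j.isLt; have h2 := hj2; split <;> omega⟩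
        (show (if j.val % 2 = 0 then j.val + 1 else j.val - 1) ≠ 2*n from by
          have := j.isLt; split <;> omega)]
      refine Prod.ext rfl (Fin.ext ?_)
      show (if (if j.val % 2 = 0 then j.val + 1 else j.val - 1) % 2 = 0
        then (if j.val % 2 = 0 then j.val + 1 else j.val - 1) + 1
        else (if j.val % 2 = 0 then j.val + 1 else j.val - 1) - 1) = j.val
      by_cases hpar : j.val % 2 = 0
      · rw [if_pos hpar, if_neg (by omega)]
        omega
      · rw [if_neg hpar, if_pos (by omega)]
        omega
  · by_cases hj : j.val < 2*n-1
    · have hvS : v ∈ S2 w b := ⟨fun h => hv (Or.inl h), fun h => hv (Or.inr h)⟩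
      set X : ↥(S2 w b) × Fin (2*n-1) := (⟨v, hvS⟩, ⟨j.val, hj⟩) with hX
      have h1 : stepFun w b L n f' (v, j) =
          ((f' X).1.val, ⟨(f' X).2.val, by have := (f' X).2.isLt; omega⟩) :=
        hmid hn hwb hnd hlen2 hleneven hL0 hLlast hadjL hf'inv hf'adj X
      rw [h1]
      have h2 := hmid hn hwb hnd hlen2 hleneven hL0 hLlast hadjL hf'inv hf'adj (f' X)
      rw [h2]; simp only [hf'inv X]; rfl
    · by_cases hvL : v ∈ L
      · by_cases hj2 : j.val = 2*n
        · rw [htop hn hwb hnd hlen2 hleneven hL0 hLlast hadjL hf'inv hf'adj v hvL j hj2]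
          have hilt : L.idxOf v < L.length := List.idxOf_lt_length_iff.mpr hvL
          have hfplt : fp (L.idxOf v) < L.length := fp_lt' hleneven hilt
          have hu : L.getD (fp (L.idxOf v)) w ∈ L := getD_mem hfplt w
          rw [htop hn hwb hnd hlen2 hleneven hL0 hLlast hadjL hf'inv hf'adj _ hu ⟨2*n, by omega⟩ rfl]
          rw [indexOf_getD hnd hfplt w, fp_fp', getD_indexOf hvL w]
          exact Prod.ext rfl (Fin.ext hj2.symm)
        · have hjv : j.val = 2*n-1 := by have := j.isLt; omega
          have huw : v ≠ w := fun h => hv (Or.inl h)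
          have hub : v ≠ b := fun h => hv (Or.inr h)
          rw [hint hn hwb hnd hlen2 hleneven hL0 hLlast hadjL hf'inv hf'adj v hvL huw hub j hjv]
          have hbd := interior_idx hnd hlen2 hleneven hL0 hLlast hvL huw hub
          have hib := ip_interior' hleneven hbd.1 hbd.2
          have humem : L.getD (ip (L.idxOf v)) w ∈ L := getD_mem (by omega) w
          have hig := interior_getD hnd hlen2 hleneven hL0 hLlast hib.1 hib.2
          rw [hint hn hwb hnd hlen2 hleneven hL0 hLlast hadjL hf'inv hf'adj _ humem hig.1 hig.2 j hjv]
          rw [indexOf_getD hnd (by omega) w, ip_ip' hbd.1,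
            getD_indexOf hvL w]
      · rw [hD hn hwb hnd hlen2 hleneven hL0 hLlast hadjL hf'inv hf'adj v hvL j hj]
        rw [hD hn hwb hnd hlen2 hleneven hL0 hLlast hadjL hf'inv hf'adj v hvL
          ⟨if j.val = 2*n then 2*n-1 else 2*n, by split <;> omega⟩
          (show ¬ (if j.val = 2*n then 2*n-1 else 2*n) < 2*n-1 from by split <;> omega)]
        refine Prod.ext rfl (Fin.ext ?_)
        show (if (if j.val = 2*n then 2*n-1 else 2*n) = 2*n then 2*n-1 else 2*n) = j.val
        have := j.isLt
        by_cases hj2 : j.val = 2*n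
        · rw [if_pos hj2, if_neg (by omega)]
          omega
        · rw [if_neg hj2, if_pos rfl]
          omega

end Main2
end Step

namespace Final
open Finset

theorem key : ∀ n : ℕ, 1 ≤ n → ∀ (V : Type) [Fintype V] [DecidableEq V]
    (G : SimpleGraph V), G.Connected →
    ∀ c : V → Bool, (∀ u v, G.Adj u v → c u ≠ c v) →
    (Finset.univ.filter (fun v => c v = true)).card = n →
    (Finset.univ.filter (fun v => c v = false)).card = n →
    ∃ f : V × Fin (2*n - 1) → V × Fin (2*n - 1),
      (∀ x, f (f x) = x) ∧ ∀ x, (prism G (2*n-1)).Adj x (f x) := by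
  intro n hn
  induction n, hn using Nat.le_induction with
  | base =>
    intro V _ _ G hconn c hprop hW hB
    rw [Finset.card_eq_one] at hW hB
    obtain ⟨w, hw⟩ := hW
    obtain ⟨bb, hb⟩ := hB
    have hcw : c w = true := by
      have h1 : w ∈ Finset.univ.filter (fun v => c v = true) := hw ▸ Finset.mem_singleton_self w
      simpa using h1
    have hcb : c bb = false := by
      have h1 : bb ∈ Finset.univ.filter (fun v => c v = false) := hb ▸ Finset.mem_singleton_self bb
      simpa using h1
    have hwb : w ≠ bb := by
      intro h; rw [h, hcb] at hcw; cases hcw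
    have hall : ∀ v, v = w ∨ v = bb := by
      intro v
      cases hcv : c v with
      | false =>
        right
        have h1 : v ∈ Finset.univ.filter (fun v => c v = false) := by simp [hcv]
        rw [hb] at h1; simpa using h1
      | true =>
        left
        have h1 : v ∈ Finset.univ.filter (fun v => c v = true) := by simp [hcv]
        rw [hw] at h1; simpa using h1
    have hadj : G.Adj w bb := by
      obtain ⟨p⟩ := hconn.preconnected w bb
      cases p with
      | nil => exact absurd rfl hwb
      | @cons _ x _ h q =>
        rcases hall x with rfl | rfl
        · exact absurd rfl h.ne'
        · exact h
    refine ⟨fun x => (if x.1 = w then bb else w, x.2), ?_, ?_⟩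
    · rintro ⟨v, j⟩
      rcases hall v with rfl | rfl <;> simp [Ne.symm hwb]
    · rintro ⟨v, j⟩
      right
      refine ⟨?_, rfl⟩
      rcases hall v with rfl | rfl
      · simpa using hadj
      · simpa [Ne.symm hwb] using hadj.symm
  | succ n hn IH =>
    intro V _ _ G hconn c hprop hW hB
    have hclass : ∀ m : Bool, (Finset.univ.filter (fun v => c v = m)).card = n+1 := by
      intro m; cases m
      · exact hB
      · exact hW
    have hsplitV : Fintype.card V = 2*n+2 := by
      have h1 := Finset.card_filter_add_card_filter_not
        (s := (Finset.univ : Finset V)) (p := fun v => c v = true)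
      have h2 : (Finset.univ.filter (fun v => ¬(c v = true))).card = n+1 := by
        rw [← hB]; congr 1; ext v; simp [Bool.not_eq_true]
      rw [Finset.card_univ] at h1
      omega
    -- choose w
    letI : DecidablePred (· ∈ (Set.univ : Set V)) := fun _ => Decidable.isTrue trivial
    have hconnU : (G.induce Set.univ).Connected :=
      (SimpleGraph.induceUnivIso G).connected_iff.mpr hconn
    obtain ⟨w, -, -, hcw1⟩ := Aux4.exists_noncut G Set.univ hconnU (fun _ => true) true
      (Or.inr fun _ => rfl)
      (by
        have hL : (Finset.univ.filter
            (fun v : V => v ∈ Set.univ ∧ (fun _ => true) v ≠ true)).card = 0 := by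
          simp
        have hR : (Finset.univ.filter
            (fun v : V => v ∈ Set.univ ∧ (fun _ => true) v = true)) = Finset.univ := by
          apply Finset.filter_true_of_mem; intro v _; exact ⟨trivial, rfl⟩
        rw [hL, hR, Finset.card_univ, hsplitV]
        omega)
      (by
        have hR : (Finset.univ.filter (· ∈ (Set.univ : Set V))) = Finset.univ := by
          apply Finset.filter_true_of_mem; intro v _; exact trivial
        rw [hR, Finset.card_univ, hsplitV]
        omega)
    have hsetw : (Set.univ \ {w} : Set V) = {v | v ≠ w} := by ext v; simp
    rw [hsetw] at hcw1
    -- choose bb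
    letI : DecidablePred (· ∈ ({v | v ≠ w} : Set V)) :=
      fun v => inferInstanceAs (Decidable (¬ v = w))
    have hA2 : (Finset.univ.filter
        (fun v => v ∈ {v | v ≠ w} ∧ c v ≠ !(c w))).card = n := by
      have he : (Finset.univ.filter (fun v => v ∈ {v | v ≠ w} ∧ c v ≠ !(c w)))
          = (Finset.univ.filter (fun v => c v = c w)).erase w := by
        ext v
        simp only [Finset.mem_erase, Finset.mem_filter, Finset.mem_univ, true_and,
          Set.mem_setOf_eq]
        constructor
        · rintro ⟨h1, h2⟩
          refine ⟨h1, ?_⟩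
          revert h2; cases c v <;> cases c w <;> simp
        · rintro ⟨h1, h2⟩
          refine ⟨h1, ?_⟩
          rw [h2]; cases c w <;> simp
      rw [he, Finset.card_erase_of_mem (by simp), hclass (c w)]
      omega
    have hB2 : (Finset.univ.filter
        (fun v => v ∈ {v | v ≠ w} ∧ c v = !(c w))).card = n+1 := by
      have he : (Finset.univ.filter (fun v => v ∈ {v | v ≠ w} ∧ c v = !(c w)))
          = Finset.univ.filter (fun v => c v = !(c w)) := by
        ext v
        simp only [Finset.mem_filter, Finset.mem_univ, true_and, Set.mem_setOf_eq]
        constructor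
        · rintro ⟨-, h2⟩; exact h2
        · intro h
          refine ⟨?_, h⟩
          rintro rfl
          simp at h
      rw [he, hclass (!(c w))]
    obtain ⟨bb, hbmem, hbc, hcw2⟩ := Aux4.exists_noncut G {v | v ≠ w} hcw1 c (!(c w))
      (Or.inl hprop) (by rw [hA2, hB2]; omega)
      (by
        have he : (Finset.univ.filter (· ∈ ({v | v ≠ w} : Set V)))
            = Finset.univ.erase w := by
          ext v; simp [Set.mem_setOf_eq]
        rw [he, Finset.card_erase_of_mem (Finset.mem_univ w), Finset.card_univ, hsplitV]
        omega)
    have hbw : bb ≠ w := hbmem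
    have hwbb : w ≠ bb := Ne.symm hbw
    have hset2 : (({v | v ≠ w} : Set V) \ {bb}) = Step.S2 w bb := by
      ext v; simp only [Set.mem_diff, Set.mem_setOf_eq, Set.mem_singleton_iff, Step.S2]
    rw [hset2] at hcw2
    letI : DecidablePred (· ∈ Step.S2 w bb) :=
      fun v => decidable_of_iff (v ≠ w ∧ v ≠ bb) Iff.rfl
    -- counts for IH
    have hIHcount : ∀ m : Bool,
        (Finset.univ.filter (fun y : ↥(Step.S2 w bb) => c y.val = m)).card = n := by
      intro m
      rw [Aux3.card_filter_subtype (Step.S2 w bb) (fun v => c v = m)]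
      have he : Finset.univ.filter (fun v => v ∈ Step.S2 w bb ∧ c v = m)
          = (Finset.univ.filter (fun v => c v = m)).erase (if c w = m then w else bb) := by
        ext v
        simp only [Finset.mem_erase, Finset.mem_filter, Finset.mem_univ, true_and,
          Step.S2, Set.mem_setOf_eq]
        constructor
        · rintro ⟨⟨h1, h2⟩, h3⟩
          refine ⟨?_, h3⟩
          split <;> assumption
        · rintro ⟨h1, h2⟩
          by_cases hcwm : c w = m
          · rw [if_pos hcwm] at h1
            refine ⟨⟨h1, ?_⟩, h2⟩
            rintro rfl
            rw [hbc] at h2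
            rw [← h2] at hcwm
            revert hcwm; cases c w <;> simp
          · rw [if_neg hcwm] at h1
            refine ⟨⟨?_, h1⟩, h2⟩
            rintro rfl
            exact hcwm h2
      have hmem : (if c w = m then w else bb) ∈ Finset.univ.filter (fun v => c v = m) := by
        by_cases hcwm : c w = m
        · rw [if_pos hcwm]; simp [hcwm]
        · rw [if_neg hcwm]
          simp only [Finset.mem_filter, Finset.mem_univ, true_and, hbc]
          revert hcwm; cases c w <;> cases m <;> simp
      rw [he, Finset.card_erase_of_mem hmem, hclass m]
      omega
    -- IH
    obtain ⟨f', hf'inv, hf'adj⟩ := IH ↥(Step.S2 w bb) (G.induce (Step.S2 w bb)) hcw2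
      (fun y => c y.val) (fun a b' hab => hprop _ _ hab) (hIHcount true) (hIHcount false)
    -- path from w to bb
    obtain ⟨p0⟩ := hconn.preconnected w bb
    set L : List V := (p0.toPath : G.Walk w bb).support with hLdef
    have hnd : L.Nodup := (p0.toPath).2.support_nodup
    have hLne : L ≠ [] := SimpleGraph.Walk.support_ne_nil _
    have hL0 : L.getD 0 w = w := by
      have h1 := SimpleGraph.Walk.head_support (p0.toPath : G.Walk w bb)
      rw [List.head_eq_getElem] at h1
      rw [List.getD_eq_getElem L w (List.length_pos_iff.mpr hLne)]
      exact h1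
    have hLlast : L.getD (L.length - 1) w = bb := by
      have h1 := SimpleGraph.Walk.getLast_support (p0.toPath : G.Walk w bb)
      rw [List.getLast_eq_getElem] at h1
      rw [List.getD_eq_getElem L w (by have := List.length_pos_iff.mpr hLne; omega)]
      exact h1
    have hleneven : L.length % 2 = 0 := by
      have hps : Even (p0.toPath : G.Walk w bb).length ↔ c w = c bb :=
        Aux.walk_even_iff hprop _
      have hlen : L.length = (p0.toPath : G.Walk w bb).length + 1 :=
        SimpleGraph.Walk.length_support _
      have hne : ¬ (c w = c bb) := by
        rw [hbc]; cases c w <;> simp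
      rcases Nat.even_or_odd (p0.toPath : G.Walk w bb).length with he | ho
      · exact absurd (hps.mp he) hne
      · obtain ⟨k, hk⟩ := ho
        omega
    have hlen2 : 2 ≤ L.length := by
      have h1 := List.length_pos_iff.mpr hLne
      omega
    have hadjL : ∀ i, i + 1 < L.length → G.Adj (L.getD i w) (L.getD (i+1) w) :=
      fun i hi => Aux5.chain'_getD (SimpleGraph.Walk.isChain_adj_support _) hi w
    -- assemble
    rw [show 2*(n+1)-1 = 2*n+1 from by omega]
    exact ⟨Step.stepFun w bb L n f',
      Step.step_inv hn hwbb hnd hlen2 hleneven hL0 hLlast hadjL hf'inv hf'adj,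
      Step.step_adj hn hwbb hnd hlen2 hleneven hL0 hLlast hadjL hf'inv hf'adj⟩

end Final


theorem statement12 {V : Type} [Fintype V] [DecidableEq V]
    (G : SimpleGraph V) (hconn : G.Connected)
    (c : V → Bool) (hproper : ∀ u v, G.Adj u v → c u ≠ c v)
    (n : ℕ) (hn : 1 ≤ n)
    (hW : (Finset.univ.filter (fun v => c v = true)).card = n)
    (hB : (Finset.univ.filter (fun v => c v = false)).card = n) :
    ∃ M : (prism G (2*n - 1)).Subgraph, M.IsPerfectMatching := by
  obtain ⟨f, hinv, hadj⟩ := Final.key n hn V G hconn c hproper hW hB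
  exact Aux.matching_of_involution f hinv hadj
end
end

section
/- Let w ∈ {e1,e2,e3}, let R be a w-pseudocylinder of even depth, t a tiling of R, and t_base the tiling of R in which every dimer is parallel to w. If Γ*(t, t_base) = {γ1,…,γm} is the set of nontrivial closed curves formed by t ∪ (−t_base), then T^w(t) = Σ_i T^w(γi) + 2 Σ_{i<j} Link(γi, γj). -/
open scoped BigOperators
noncomputable section

section Aux

lemma myDet3_snd (a x u : R3) (h : x = u ∨ x = -u) : det3 a x u = 0 := by
  rcases h with h | h <;> subst h <;>
    simp [det3, Matrix.det_fin_three, Matrix.of_apply, Matrix.vecHead, Matrix.vecTail] <;> ring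

lemma myDet3_fst (x b u : R3) (h : x = u ∨ x = -u) : det3 x b u = 0 := by
  rcases h with h | h <;> subst h <;>
    simp [det3, Matrix.det_fin_three, Matrix.of_apply, Matrix.vecHead, Matrix.vecTail] <;> ring

lemma myTauR_zero_left (u : R3) (l0 l1 : RSeg) (h : l0.v = u ∨ l0.v = -u) :
    tauR u l0 l1 = 0 := by
  unfold tauR
  split_ifs with hc
  · rw [myDet3_snd _ _ _ h]; ring
  · rfl

lemma myTauR_zero_right (u : R3) (l0 l1 : RSeg) (h : l1.v = u ∨ l1.v = -u) :
    tauR u l0 l1 = 0 := by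
  unfold tauR
  split_ifs with hc
  · rw [myDet3_fst _ _ _ h]; ring
  · rfl

lemma myDimer_v (d : Domino) : d.dimer.v = d.v := by
  unfold Domino.dimer; split_ifs <;> rfl

lemma myReverse_v (l : RSeg) : l.reverse.v = -l.v := rfl

lemma myMultiset_sum_map_sum {ι α : Type*} (s : Finset ι) (M : ι → Multiset α) (f : α → ℝ) :
    ((∑ i ∈ s, M i).map f).sum = ∑ i ∈ s, ((M i).map f).sum := by
  classical
  induction s using Finset.induction with
  | empty => simp
  | insert _ _ h ih => simp [Finset.sum_insert h, Multiset.map_add, Multiset.sum_add, ih]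

lemma mySplit {m : ℕ} (F : Fin m → Fin m → ℝ) :
    ∑ i, ∑ j, F i j
      = (∑ i, F i i) + ∑ i, ∑ j, (if i < j then F i j + F j i else 0) := by
  have h1 : ∀ i j : Fin m, F i j
      = (if i < j then F i j else 0) + (if j < i then F i j else 0)
        + (if i = j then F i j else 0) := by
    intro i j
    rcases lt_trichotomy i j with h | h | h
    · simp [h, asymm h, h.ne]
    · simp [h, lt_irrefl]
    · simp [h, asymm h, h.ne']
  have hA : (∑ i, ∑ j, (if j < i then F i j else 0))
      = ∑ i : Fin m, ∑ j : Fin m, (if i < j then F j i else 0) := Finset.sum_comm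
  have hB : (∑ i, ∑ j, (if i = j then F i j else 0)) = ∑ i, F i i := by
    refine Finset.sum_congr rfl fun i _ => ?_
    simp [Finset.sum_ite_eq]
  calc ∑ i, ∑ j, F i j
      = ∑ i, ∑ j, ((if i < j then F i j else 0) + (if j < i then F i j else 0)
          + (if i = j then F i j else 0)) :=
        Finset.sum_congr rfl fun i _ => Finset.sum_congr rfl fun j _ => h1 i j
    _ = (∑ i, ∑ j, (if i < j then F i j else 0))
          + (∑ i, ∑ j, (if j < i then F i j else 0))
          + (∑ i, ∑ j, (if i = j then F i j else 0)) := by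
        simp [Finset.sum_add_distrib]
    _ = (∑ i, F i i) + ∑ i, ∑ j, (if i < j then F i j + F j i else 0) := by
        rw [hA, hB]
        have : (∑ i : Fin m, ∑ j : Fin m, (if i < j then F i j else 0))
            + (∑ i : Fin m, ∑ j : Fin m, (if i < j then F j i else 0))
            = ∑ i : Fin m, ∑ j : Fin m, (if i < j then F i j + F j i else 0) := by
          rw [← Finset.sum_add_distrib]
          refine Finset.sum_congr rfl fun i _ => ?_
          rw [← Finset.sum_add_distrib]
          refine Finset.sum_congr rfl fun j _ => ?_
          split_ifs <;> simp
        linarith [this]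

end Aux

theorem statement14 (R : Finset (Fin 3 → ℤ)) (k : Fin 3) (N : ℕ) (hN : 0 < N)
    (hR : IsPseudocylinder R k (2*N))
    (t tbase : Finset Domino) (ht : IsTiling R t) (htb : IsTiling R tbase)
    (hbase : ∀ d ∈ tbase, d.v = stdR k ∨ d.v = -(stdR k))
    (m : ℕ) (len : Fin m → ℕ) (γ : ∀ i, Fin (len i) → RSeg)
    (hcl : ∀ i, IsClosedCurve (γ i)) (hsim : ∀ i, IsSimpleCurve (γ i))
    (hdec : (∑ i : Fin m, Multiset.map (γ i) Finset.univ.val)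
        = Multiset.map Domino.dimer (t \ tbase).val
          + Multiset.map (fun d => d.dimer.reverse) ((tbase \ t).val)) :
    Tdim (stdR k) t = (∑ i, Tfam (stdR k) (γ i) (γ i))
      + 2 * ∑ i : Fin m, ∑ j : Fin m,
          if i < j then LinkAlong (stdR k) (γ i) (γ j) else 0 := by
  classical
  set u : R3 := stdR k with hu
  set A : Multiset RSeg := Multiset.map Domino.dimer (t \ tbase).val with hA
  set B : Multiset RSeg :=
    Multiset.map (fun d => d.dimer.reverse) ((tbase \ t).val) with hB
  -- every segment of B has direction parallel to u
  have hBpar : ∀ l ∈ B, l.v = u ∨ l.v = -u := by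
    intro l hl
    rcases Multiset.mem_map.1 hl with ⟨d, hd, rfl⟩
    have hdt : d ∈ tbase := (Finset.mem_sdiff.1 (Finset.mem_def.mpr hd)).1
    rcases hbase d hdt with h | h
    · right; rw [myReverse_v, myDimer_v, h]
    · left; rw [myReverse_v, myDimer_v, h, neg_neg]
  -- Step 1 : the pretwist only involves dominoes of t \ tbase
  have step1 : Tdim u t
      = ∑ d0 ∈ t \ tbase, ∑ d1 ∈ t \ tbase, tauR u d0.dimer d1.dimer := by
    have inner : ∀ d0 : Domino, ∑ d1 ∈ t, tauR u d0.dimer d1.dimer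
        = ∑ d1 ∈ t \ tbase, tauR u d0.dimer d1.dimer := by
      intro d0
      refine (Finset.sum_subset Finset.sdiff_subset ?_).symm
      intro d1 h1 h2
      have hb : d1 ∈ tbase := by
        by_contra hn; exact h2 (Finset.mem_sdiff.2 ⟨h1, hn⟩)
      refine myTauR_zero_right u _ _ ?_
      rw [myDimer_v]; exact hbase d1 hb
    calc Tdim u t = ∑ d0 ∈ t, ∑ d1 ∈ t \ tbase, tauR u d0.dimer d1.dimer :=
          Finset.sum_congr rfl fun d0 _ => inner d0
      _ = ∑ d0 ∈ t \ tbase, ∑ d1 ∈ t \ tbase, tauR u d0.dimer d1.dimer := by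
          refine (Finset.sum_subset Finset.sdiff_subset ?_).symm
          intro d0 h1 h2
          have hb : d0 ∈ tbase := by
            by_contra hn; exact h2 (Finset.mem_sdiff.2 ⟨h1, hn⟩)
          refine Finset.sum_eq_zero fun d1 _ => myTauR_zero_left u _ _ ?_
          rw [myDimer_v]; exact hbase d0 hb
  -- Step 2 : rewrite the double Finset sum as a double multiset sum over A
  have step2 : (∑ d0 ∈ t \ tbase, ∑ d1 ∈ t \ tbase, tauR u d0.dimer d1.dimer)
      = (A.map (fun l0 => ((A.map (fun l1 => tauR u l0 l1)).sum))).sum := by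
    rw [hA, Multiset.map_map, Finset.sum_map_val]
    refine Finset.sum_congr rfl fun d0 _ => ?_
    simp only [Multiset.map_map, Function.comp]
    exact (Finset.sum_map_val _ _).symm
  -- Step 3 : the B-parts contribute nothing
  have step3 : ((A + B).map
        (fun l0 => (((A + B).map (fun l1 => tauR u l0 l1)).sum))).sum
      = (A.map (fun l0 => ((A.map (fun l1 => tauR u l0 l1)).sum))).sum := by
    have hin : ∀ l0 : RSeg, ((A + B).map (fun l1 => tauR u l0 l1)).sum
        = (A.map (fun l1 => tauR u l0 l1)).sum := by
      intro l0
      rw [Multiset.map_add, Multiset.sum_add]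
      have hz : (B.map (fun l1 => tauR u l0 l1)).sum = 0 := by
        refine Multiset.sum_eq_zero ?_
        intro x hx
        rcases Multiset.mem_map.1 hx with ⟨l1, hl1, rfl⟩
        exact myTauR_zero_right _ _ _ (hBpar l1 hl1)
      rw [hz, add_zero]
    rw [Multiset.map_congr rfl (fun l0 _ => hin l0)]
    rw [Multiset.map_add, Multiset.sum_add]
    have hz : (B.map (fun l0 => (A.map (fun l1 => tauR u l0 l1)).sum)).sum = 0 := by
      refine Multiset.sum_eq_zero ?_
      intro x hx
      rcases Multiset.mem_map.1 hx with ⟨l0, hl0, rfl⟩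
      refine Multiset.sum_eq_zero ?_
      intro y hy
      rcases Multiset.mem_map.1 hy with ⟨l1, hl1, rfl⟩
      exact myTauR_zero_left _ _ _ (hBpar l0 hl0)
    rw [hz, add_zero]
  -- Step 4 : the multiset sum over the curves equals the double sum of Tfam's
  set M : Multiset RSeg := ∑ i : Fin m, Multiset.map (γ i) Finset.univ.val with hM
  have hMAB : M = A + B := hdec
  have step4 : (M.map (fun l0 => ((M.map (fun l1 => tauR u l0 l1)).sum))).sum
      = ∑ i, ∑ j, Tfam u (γ i) (γ j) := by
    have hg : ∀ l0 : RSeg, ((M.map (fun l1 => tauR u l0 l1)).sum)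
        = ∑ j, ∑ q : Fin (len j), tauR u l0 (γ j q) := by
      intro l0
      rw [hM, myMultiset_sum_map_sum]
      refine Finset.sum_congr rfl fun j _ => ?_
      rw [Multiset.map_map, Finset.sum_map_val]
      simp [Function.comp]
    calc (M.map (fun l0 => ((M.map (fun l1 => tauR u l0 l1)).sum))).sum
        = ∑ i, ((Multiset.map (γ i) Finset.univ.val).map
            (fun l0 => ((M.map (fun l1 => tauR u l0 l1)).sum))).sum := by
          rw [hM]; exact myMultiset_sum_map_sum _ _ _
      _ = ∑ i, ∑ p : Fin (len i), ((M.map (fun l1 => tauR u (γ i p) l1)).sum) := by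
          refine Finset.sum_congr rfl fun i _ => ?_
          rw [Multiset.map_map, Finset.sum_map_val]
          simp [Function.comp]
      _ = ∑ i, ∑ p : Fin (len i), ∑ j, ∑ q : Fin (len j), tauR u (γ i p) (γ j q) := by
          refine Finset.sum_congr rfl fun i _ => Finset.sum_congr rfl fun p _ => hg _
      _ = ∑ i, ∑ j, Tfam u (γ i) (γ j) := by
          refine Finset.sum_congr rfl fun i _ => ?_
          rw [Finset.sum_comm]
          rfl
  -- Step 5 : algebraic rearrangement of the right hand side
  have step5 : (∑ i, ∑ j, Tfam u (γ i) (γ j))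
      = (∑ i, Tfam u (γ i) (γ i))
        + 2 * ∑ i : Fin m, ∑ j : Fin m,
            (if i < j then LinkAlong u (γ i) (γ j) else 0) := by
    rw [mySplit (fun i j => Tfam u (γ i) (γ j))]
    congr 1
    rw [Finset.mul_sum]
    refine Finset.sum_congr rfl fun i _ => ?_
    rw [Finset.mul_sum]
    refine Finset.sum_congr rfl fun j _ => ?_
    unfold LinkAlong
    split_ifs <;> ring
  calc Tdim u t
      = (A.map (fun l0 => ((A.map (fun l1 => tauR u l0 l1)).sum))).sum := by
        rw [step1, step2]
    _ = ((A + B).map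
        (fun l0 => (((A + B).map (fun l1 => tauR u l0 l1)).sum))).sum := step3.symm
    _ = (M.map (fun l0 => ((M.map (fun l1 => tauR u l0 l1)).sum))).sum := by rw [hMAB]
    _ = ∑ i, ∑ j, Tfam u (γ i) (γ j) := step4
    _ = _ := step5
end
end
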